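/- arXiv:2412.20606 — 6 statements merged into one kernel-verified Lean document; each statement's English description precedes it below -/
import Mathlib

section
/- Let N be a positive integer and ℓ a prime with ℓ ∣ N and ℓ² ∤ N. Let a, b, a', b' be integers with ℓb − a(N/ℓ) = 1 and ℓb' − a'(N/ℓ) = 1, and set γ = [[ℓ, a],[N, ℓb]] and γ' = [[ℓ, a'],[N, ℓb']]. Then the rational matrix γ·(γ')⁻¹ has integer entries, determinant 1, and lower-left entry divisible by N (i.e. it lies in Γ₀(N)); consequently, for every integer k and every function f : ℍ → ℂ satisfying f(δ·z) = (cz+d)^k f(z) for all δ = [[α,β],[c,d]] ∈ Γ₀(N), one has (Nz+ℓb)^{−k} f(γ·z) = (Nz+ℓb')^{−k} f(γ'·z) for all z ∈ ℍ (so the Atkin–Lehner operator w_ℓ does not depend on the choice of a and b). -/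
open UpperHalfPlane Complex CongruenceSubgroup MatrixGroups Matrix

lemma aux_denom_ne_zero (N : ℕ) (hN : 0 < N) (z : ℍ) (r : ℝ) :
    ((N : ℂ) * z + (r : ℂ)) ≠ 0 := by
  intro h
  have him : ((N : ℂ) * z + (r : ℂ)).im = 0 := by rw [h]; simp
  simp only [Complex.add_im, Complex.mul_im, Complex.natCast_re, Complex.natCast_im,
    Complex.ofReal_im, UpperHalfPlane.coe_im] at him
  have : (N : ℝ) * z.im > 0 := mul_pos (by exact_mod_cast hN) z.im_pos
  nlinarith [him]

/-- independence of the Atkin–Lehner operator from the choice of the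
auxiliary integers `a, b`. -/
theorem atkinLehner_independent_of_choice (N ℓ : ℕ) (hN : 0 < N) (hℓ : ℓ.Prime)
    (hdvd : ℓ ∣ N) (hndvd : ¬ ℓ ^ 2 ∣ N) (a b a' b' : ℤ)
    (hab : (ℓ : ℤ) * b - a * ((N / ℓ : ℕ) : ℤ) = 1)
    (hab' : (ℓ : ℤ) * b' - a' * ((N / ℓ : ℕ) : ℤ) = 1) :
    (∃ m : Matrix (Fin 2) (Fin 2) ℤ,
        m.map (Int.cast : ℤ → ℚ) =
          (!![(ℓ : ℚ), (a : ℚ); (N : ℚ), (ℓ : ℚ) * (b : ℚ)] *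
            (!![(ℓ : ℚ), (a' : ℚ); (N : ℚ), (ℓ : ℚ) * (b' : ℚ)])⁻¹) ∧
        m.det = 1 ∧ (N : ℤ) ∣ m 1 0) ∧
    (∀ (k : ℤ) (f : ℍ → ℂ),
      (∀ δ : SL(2, ℤ), δ ∈ Gamma0 N → ∀ z : ℍ,
        f (δ • z) =
          (((δ : Matrix (Fin 2) (Fin 2) ℤ) 1 0 : ℂ) * z +
            ((δ : Matrix (Fin 2) (Fin 2) ℤ) 1 1 : ℂ)) ^ k * f z) →
      ∀ z w w' : ℍ,
        (w : ℂ) = ((ℓ : ℂ) * z + (a : ℂ)) / ((N : ℂ) * z + (ℓ : ℂ) * (b : ℂ)) →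
        (w' : ℂ) = ((ℓ : ℂ) * z + (a' : ℂ)) / ((N : ℂ) * z + (ℓ : ℂ) * (b' : ℂ)) →
        ((N : ℂ) * z + (ℓ : ℂ) * (b : ℂ)) ^ (-k) * f w =
          ((N : ℂ) * z + (ℓ : ℂ) * (b' : ℂ)) ^ (-k) * f w') := by
  set M : ℤ := ((N / ℓ : ℕ) : ℤ) with hMdef
  have hM : (ℓ : ℤ) * M = (N : ℤ) := by
    rw [hMdef]; exact_mod_cast Nat.mul_div_cancel' hdvd
  set m : Matrix (Fin 2) (Fin 2) ℤ :=
    !![(ℓ : ℤ) * b' - a * M, a - a'; (N : ℤ) * (b' - b), (ℓ : ℤ) * b - a' * M] with hm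
  have hdet : m.det = 1 := by
    rw [hm, Matrix.det_fin_two_of]
    linear_combination ((ℓ : ℤ) * b' - a' * M) * hab + hab' + (a - a') * (b' - b) * hM
  have hℓQ : (ℓ : ℚ) ≠ 0 := by exact_mod_cast hℓ.ne_zero
  have hMQ : (ℓ : ℚ) * (M : ℚ) = (N : ℚ) := by exact_mod_cast hM
  have habQ : (ℓ : ℚ) * (b : ℚ) - (a : ℚ) * (M : ℚ) = 1 := by exact_mod_cast hab
  have habQ' : (ℓ : ℚ) * (b' : ℚ) - (a' : ℚ) * (M : ℚ) = 1 := by exact_mod_cast hab'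
  have hdet' : (!![(ℓ : ℚ), (a' : ℚ); (N : ℚ), (ℓ : ℚ) * (b' : ℚ)]).det ≠ 0 := by
    have : (!![(ℓ : ℚ), (a' : ℚ); (N : ℚ), (ℓ : ℚ) * (b' : ℚ)]).det = (ℓ : ℚ) := by
      rw [Matrix.det_fin_two_of]
      linear_combination (ℓ : ℚ) * habQ' + (a' : ℚ) * hMQ
    rw [this]; exact hℓQ
  have hmap : m.map (Int.cast : ℤ → ℚ) =
      (!![(ℓ : ℚ), (a : ℚ); (N : ℚ), (ℓ : ℚ) * (b : ℚ)] *
        (!![(ℓ : ℚ), (a' : ℚ); (N : ℚ), (ℓ : ℚ) * (b' : ℚ)])⁻¹) := by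
    have hinv := Matrix.mul_nonsing_inv _ (isUnit_iff_ne_zero.mpr hdet')
    have key : !![(ℓ : ℚ), (a : ℚ); (N : ℚ), (ℓ : ℚ) * (b : ℚ)] =
        m.map (Int.cast : ℤ → ℚ) * !![(ℓ : ℚ), (a' : ℚ); (N : ℚ), (ℓ : ℚ) * (b' : ℚ)] := by
      rw [hm]
      ext i j
      fin_cases i <;> fin_cases j <;>
        simp [Matrix.mul_apply, Fin.sum_univ_two]
      · linear_combination (-(ℓ : ℚ)) * habQ' + ((a : ℚ) - (a' : ℚ)) * hMQ
      · push_cast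
        linear_combination (-(a : ℚ)) * habQ'
      · push_cast
        linear_combination (-(N : ℚ)) * habQ'
      · push_cast
        linear_combination (-(ℓ : ℚ) * (b : ℚ)) * habQ' +
          ((a' : ℚ) * (b' : ℚ) - (a' : ℚ) * (b : ℚ)) * hMQ
    rw [key, Matrix.mul_assoc, hinv, Matrix.mul_one]
  have hm00 : m 0 0 = (ℓ : ℤ) * b' - a * M := by rw [hm]; rfl
  have hm01 : m 0 1 = a - a' := by rw [hm]; rfl
  have hm10 : m 1 0 = (N : ℤ) * (b' - b) := by rw [hm]; rfl
  have hm11 : m 1 1 = (ℓ : ℤ) * b - a' * M := by rw [hm]; rfl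
  refine ⟨⟨m, hmap, hdet, ⟨b' - b, hm10⟩⟩, ?_⟩
  set δ : SL(2, ℤ) := ⟨m, hdet⟩ with hδ
  have hmem : δ ∈ Gamma0 N := by
    rw [Gamma0_mem]
    show ((m 1 0 : ℤ) : ZMod N) = 0
    rw [hm]
    simp
  intro k f hf z w w' hw hw'
  have hMC : (ℓ : ℂ) * (M : ℂ) = (N : ℂ) := by exact_mod_cast hM
  have habC : (ℓ : ℂ) * (b : ℂ) - (a : ℂ) * (M : ℂ) = 1 := by exact_mod_cast hab
  have habC' : (ℓ : ℂ) * (b' : ℂ) - (a' : ℂ) * (M : ℂ) = 1 := by exact_mod_cast hab'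
  set Dz : ℂ := (N : ℂ) * z + (ℓ : ℂ) * (b : ℂ) with hDzdef
  set Dz' : ℂ := (N : ℂ) * z + (ℓ : ℂ) * (b' : ℂ) with hDzdef'
  have hDz : Dz ≠ 0 := by
    have := aux_denom_ne_zero N hN z (((ℓ : ℤ) * b : ℤ) : ℝ)
    rw [hDzdef]; push_cast at this ⊢; convert this using 2
  have hDz' : Dz' ≠ 0 := by
    have := aux_denom_ne_zero N hN z (((ℓ : ℤ) * b' : ℤ) : ℝ)
    rw [hDzdef']; push_cast at this ⊢; convert this using 2
  have hdenom : ((m 1 0 : ℤ) : ℂ) * (w' : ℂ) + ((m 1 1 : ℤ) : ℂ) = Dz / Dz' := by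
    have hclear : (N : ℂ) * ((b' : ℂ) - b) * ((ℓ : ℂ) * z + a') +
        ((ℓ : ℂ) * b - (a' : ℂ) * M) * Dz' = Dz := by
      rw [hDzdef, hDzdef']
      linear_combination ((N : ℂ) * z + (ℓ : ℂ) * b) * habC' +
        ((a' : ℂ) * b - (a' : ℂ) * b') * hMC
    rw [hm10, hm11, hw', eq_div_iff hDz', ← hclear]
    push_cast
    field_simp
  have hnum : ((m 0 0 : ℤ) : ℂ) * (w' : ℂ) + ((m 0 1 : ℤ) : ℂ) =
      ((ℓ : ℂ) * z + a) / Dz' := by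
    have hclear : ((ℓ : ℂ) * b' - (a : ℂ) * M) * ((ℓ : ℂ) * z + a') +
        ((a : ℂ) - a') * Dz' = (ℓ : ℂ) * z + a := by
      rw [hDzdef']
      linear_combination ((ℓ : ℂ) * z + (a : ℂ)) * habC' +
        ((a' : ℂ) - a) * (z : ℂ) * hMC
    rw [hm00, hm01, hw', eq_div_iff hDz', ← hclear]
    push_cast
    field_simp
  have hsmul : w = δ • w' := by
    have hcoe : (↑(δ • w') : ℂ) =
        (((m 0 0 : ℤ) : ℂ) * (w' : ℂ) + ((m 0 1 : ℤ) : ℂ)) /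
          (((m 1 0 : ℤ) : ℂ) * (w' : ℂ) + ((m 1 1 : ℤ) : ℂ)) := by
      rw [UpperHalfPlane.specialLinearGroup_apply]
      simp [UpperHalfPlane.coe_mk]
      rfl
    apply UpperHalfPlane.ext
    rw [hcoe, hnum, hdenom, hw]
    rw [div_div_div_eq]
    rw [div_eq_div_iff hDz (mul_ne_zero hDz' hDz)]
    ring
  have key := hf δ hmem w'
  rw [← hsmul] at key
  have e0 : ((δ : Matrix (Fin 2) (Fin 2) ℤ) 1 0) = m 1 0 := rfl
  have e1 : ((δ : Matrix (Fin 2) (Fin 2) ℤ) 1 1) = m 1 1 := rfl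
  rw [e0, e1, hdenom] at key
  rw [key]
  have h1 : Dz ^ k ≠ 0 := zpow_ne_zero _ hDz
  have h2 : Dz' ^ k ≠ 0 := zpow_ne_zero _ hDz'
  rw [div_zpow, zpow_neg Dz, zpow_neg Dz']
  field_simp
end

section
/- Let N ≥ 1 and k ≥ 0 be integers, ℓ a prime dividing N exactly once, and a, b integers with ℓb − a(N/ℓ) = 1; set γ_ℓ = [[ℓ, a],[N, ℓb]]. For every f ∈ M_k(Γ₀(N)), the form U_ℓ(f) + ℓ^{k/2−1}·w_ℓ(f) has level N/ℓ: there exists g ∈ M_k(Γ₀(N/ℓ)) such that g(z) = (1/ℓ)·∑_{j=0}^{ℓ−1} f((z+j)/ℓ) + ℓ^{k−1}·(Nz+ℓb)^{−k}·f(γ_ℓ·z) for all z ∈ ℍ. -/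
open UpperHalfPlane Complex CongruenceSubgroup MatrixGroups Matrix ModularForm
open scoped ModularForm Manifold

set_option synthInstance.maxHeartbeats 1000000
set_option maxHeartbeats 1000000

noncomputable def UpperHalfPlane.shiftDiv (p : ℕ) (hp : 0 < p) (j : ℕ) (z : ℍ) : ℍ :=
  ⟨((z : ℂ) + (j : ℂ)) / (p : ℂ), by
    have h : (((z : ℂ) + (j : ℂ)) / ((p : ℝ) : ℂ)).im = ((z : ℂ) + (j : ℂ)).im / (p : ℝ) :=
      Complex.div_ofReal_im _ _
    rw [show ((p : ℕ) : ℂ) = ((p : ℝ) : ℂ) by push_cast; ring, h]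
    have him : ((z : ℂ) + (j : ℂ)).im = (z : ℂ).im := by simp
    rw [him]
    exact div_pos z.im_pos (by exact_mod_cast hp)⟩

namespace LevelDrop


lemma det_map_int (M : Matrix (Fin 2) (Fin 2) ℤ) :
    (M.map ((↑) : ℤ → ℝ)).det = (M.det : ℝ) := by
  rw [Matrix.det_fin_two, Matrix.det_fin_two]
  simp [Matrix.map_apply]

noncomputable def toGL (M : Matrix (Fin 2) (Fin 2) ℤ) (h : 0 < M.det) : GL(2, ℝ)⁺ :=
  ⟨Matrix.GeneralLinearGroup.mkOfDetNeZero (M.map ((↑) : ℤ → ℝ))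
      (by rw [det_map_int]; exact_mod_cast h.ne'), by
    rw [Matrix.mem_glpos]
    rw [Matrix.GeneralLinearGroup.val_det_apply]
    show (0:ℝ) < (M.map ((↑) : ℤ → ℝ)).det
    rw [det_map_int]; exact_mod_cast h⟩

@[simp] lemma toGL_coe (M : Matrix (Fin 2) (Fin 2) ℤ) (h : 0 < M.det) :
  ((toGL M h : GL (Fin 2) ℝ) : Matrix (Fin 2) (Fin 2) ℝ) = M.map ((↑) : ℤ → ℝ) := rfl

@[simp] lemma toGL_apply (M : Matrix (Fin 2) (Fin 2) ℤ) (h : 0 < M.det) (i j : Fin 2) :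
  (toGL M h : GL (Fin 2) ℝ) i j = (M i j : ℝ) := rfl

noncomputable instance glposSlash : SlashAction ℤ GL(2,ℝ)⁺ (ℍ → ℂ) :=
  monoidHomSlashAction (GL(2,ℝ)⁺).subtype

lemma coe_glpos_smul (A : GL(2,ℝ)⁺) (z : ℍ) :
    ((A • z : ℍ) : ℂ) = num A z / denom A z :=
  coe_smul_of_det_pos A.2 z

lemma slash_glpos (f : ℍ → ℂ) (k : ℤ) (A : GL(2,ℝ)⁺) (τ : ℍ) :
    (f ∣[k] A) τ = f (A • τ) *
      ((((A : GL (Fin 2) ℝ) : Matrix (Fin 2) (Fin 2) ℝ).det : ℝ) : ℂ) ^ (k - 1) *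
        denom A τ ^ (-k) := by
  have hpos : 0 < (A : GL (Fin 2) ℝ).det.val := A.2
  rw [show (f ∣[k] A) = f ∣[k] (A : GL (Fin 2) ℝ) from rfl, ModularForm.slash_apply]
  have hpos' : 0 < ((A : GL (Fin 2) ℝ) : Matrix (Fin 2) (Fin 2) ℝ).det := by
    rw [← Matrix.GeneralLinearGroup.val_det_apply]; exact hpos
  simp only [σ, Matrix.GeneralLinearGroup.val_det_apply, hpos', if_true,
    ContinuousAlgEquiv.refl_apply, abs_of_pos hpos']
  rfl

lemma SL_slash_glpos (F : ℍ → ℂ) (k : ℤ) (A : SL(2,ℤ)) :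
    F ∣[k] A = F ∣[k] (A : GL(2,ℝ)⁺) := by
  rw [ModularForm.SL_slash]
  show F ∣[k] _ = F ∣[k] ((A : GL(2,ℝ)⁺) : GL (Fin 2) ℝ)
  congr 1

lemma toGL_mul (M M' : Matrix (Fin 2) (Fin 2) ℤ) (h : 0 < M.det) (h' : 0 < M'.det)
    (h'' : 0 < (M * M').det) : toGL (M * M') h'' = toGL M h * toGL M' h' := by
  apply Subtype.ext
  apply Units.ext
  show (M * M').map (Int.castRingHom ℝ) = _
  rw [Matrix.map_mul]
  rfl

lemma toGL_SL (γ : SL(2, ℤ)) :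
    (γ : GL(2, ℝ)⁺) = toGL γ.1 (by rw [γ.2]; norm_num) := by
  apply Subtype.ext
  apply Units.ext
  rfl

lemma sum_slash {ι : Type*} (s : Finset ι) (k : ℤ) (A : GL(2,ℝ)⁺) (F : ι → ℍ → ℂ) :
    (∑ i ∈ s, F i) ∣[k] A = ∑ i ∈ s, (F i) ∣[k] A := by
  classical
  induction s using Finset.induction with
  | empty => simp
  | insert _ _ h ih => rw [Finset.sum_insert h, Finset.sum_insert h, SlashAction.add_slash, ih]

lemma mdiff_slash {k : ℤ} {f : ℍ → ℂ} (hf : MDifferentiable 𝓘(ℂ) 𝓘(ℂ) f) (A : GL(2,ℝ)⁺) :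
    MDifferentiable 𝓘(ℂ) 𝓘(ℂ) (f ∣[k] A) := by
  intro τ
  have hcoe : MDifferentiableAt 𝓘(ℂ) 𝓘(ℂ) (fun z : ℍ => ((A • z : ℍ) : ℂ)) τ := by
    have heq : (fun z : ℍ => ((A • z : ℍ) : ℂ))
        = (fun w : ℂ => (((A : GL (Fin 2) ℝ) 0 0 : ℂ) * w + (A : GL (Fin 2) ℝ) 0 1) /
            (((A : GL (Fin 2) ℝ) 1 0 : ℂ) * w + (A : GL (Fin 2) ℝ) 1 1)) ∘
          ((↑) : ℍ → ℂ) := by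
      funext z
      simp only [Function.comp_apply, coe_glpos_smul, num, denom]
    rw [heq]
    refine MDifferentiableAt.comp τ (DifferentiableAt.mdifferentiableAt ?_)
      (mdifferentiable_coe τ)
    exact DifferentiableAt.div (by fun_prop) (by fun_prop) (denom_ne_zero A τ)
  have h1 : MDifferentiableAt 𝓘(ℂ) 𝓘(ℂ) (fun z : ℍ => f (A • z)) τ := by
    have h2 : DifferentiableAt ℂ (f ∘ ofComplex) (((A • τ : ℍ)) : ℂ) :=
      mdifferentiableAt_iff.mp (hf (A • τ))
    have heq : (fun z : ℍ => f (A • z))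
        = (f ∘ ofComplex) ∘ (fun z : ℍ => ((A • z : ℍ) : ℂ)) := by
      funext z
      simp only [Function.comp_apply, ofComplex_apply]
    rw [heq]
    exact MDifferentiableAt.comp τ (mdifferentiableAt_iff_differentiableAt.mpr h2) hcoe
  have hden : MDifferentiableAt 𝓘(ℂ) 𝓘(ℂ) (fun z : ℍ => (denom A z) ^ (-k)) τ := by
    have heq : (fun z : ℍ => (denom A z) ^ (-k))
        = (fun w : ℂ => (((A : GL (Fin 2) ℝ) 1 0 : ℂ) * w + (A : GL (Fin 2) ℝ) 1 1) ^ (-k)) ∘ ((↑) : ℍ → ℂ) := rfl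
    rw [heq]
    refine MDifferentiableAt.comp τ (DifferentiableAt.mdifferentiableAt ?_)
      (mdifferentiable_coe τ)
    exact DifferentiableAt.zpow (by fun_prop) (Or.inl (denom_ne_zero A τ))
  rw [funext (slash_glpos f k A)]
  exact (h1.mul mdifferentiableAt_const).mul hden

lemma hermite (M : Matrix (Fin 2) (Fin 2) ℤ) (h : 0 < M.det) :
    ∃ (γ : SL(2,ℤ)) (A B D : ℤ), 0 < A ∧ 0 < D ∧ M = γ.1 * !![A, B; 0, D] := by
  obtain ⟨α, β, c, e, rfl⟩ : ∃ α β c e, M = !![α, β; c, e] :=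
    ⟨M 0 0, M 0 1, M 1 0, M 1 1, Matrix.eta_fin_two M⟩
  rw [Matrix.det_fin_two_of] at h
  have hnz : ¬(α = 0 ∧ c = 0) := by rintro ⟨rfl, rfl⟩; simp at h
  have hg : Int.gcd α c ≠ 0 := by
    rw [Ne, Int.gcd_eq_zero_iff]; tauto
  have hgpos : (0:ℤ) < (Int.gcd α c : ℤ) := by exact_mod_cast Nat.pos_of_ne_zero hg
  obtain ⟨u, hu⟩ : ((Int.gcd α c : ℤ)) ∣ α := Int.gcd_dvd_left α c
  obtain ⟨v, hv⟩ : ((Int.gcd α c : ℤ)) ∣ c := Int.gcd_dvd_right α c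
  have hbez : (Int.gcd α c : ℤ) = α * Int.gcdA α c + c * Int.gcdB α c := Int.gcd_eq_gcd_ab α c
  set g : ℤ := (Int.gcd α c : ℤ)
  set x : ℤ := Int.gcdA α c
  set y : ℤ := Int.gcdB α c
  have hγ'det : (!![x, y; -v, u] : Matrix (Fin 2) (Fin 2) ℤ).det = 1 := by
    rw [Matrix.det_fin_two_of]
    apply mul_left_cancel₀ hgpos.ne'
    rw [mul_one]
    linear_combination -x*hu - y*hv - hbez
  have hprod : (!![x, y; -v, u] : Matrix (Fin 2) (Fin 2) ℤ) * !![α, β; c, e]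
      = !![g, x*β + y*e; 0, -v*β + u*e] := by
    ext i j
    fin_cases i <;> fin_cases j <;> simp [Matrix.mul_apply, Fin.sum_univ_two]
    · linear_combination -hbez
    · linear_combination -v*hu + u*hv
  have hT11 : 0 < -v*β + u*e := by
    have hdet : g * (-v*β + u*e) = α * e - β * c := by
      have h2 := congrArg Matrix.det hprod
      rw [Matrix.det_mul, hγ'det, one_mul, Matrix.det_fin_two_of, Matrix.det_fin_two_of] at h2
      linear_combination -h2
    nlinarith
  let γ' : SL(2,ℤ) := ⟨!![x, y; -v, u], hγ'det⟩
  refine ⟨γ'⁻¹, g, x*β + y*e, -v*β + u*e, hgpos, hT11, ?_⟩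
  have hco : ((γ'⁻¹ : SL(2,ℤ)).1 : Matrix (Fin 2) (Fin 2) ℤ) * !![x, y; -v, u] = 1 := by
    have h3 : ((γ'⁻¹ * γ' : SL(2,ℤ)) : Matrix (Fin 2) (Fin 2) ℤ)
        = ((1 : SL(2,ℤ)) : Matrix (Fin 2) (Fin 2) ℤ) := by rw [inv_mul_cancel]
    rw [Matrix.SpecialLinearGroup.coe_mul, Matrix.SpecialLinearGroup.coe_one] at h3
    exact h3
  calc (!![α, β; c, e] : Matrix (Fin 2) (Fin 2) ℤ)
      = ((γ'⁻¹ : SL(2,ℤ)).1 * !![x, y; -v, u]) * !![α, β; c, e] := by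
        rw [hco, one_mul]
    _ = (γ'⁻¹ : SL(2,ℤ)).1 * (!![x, y; -v, u] * !![α, β; c, e]) := by
        rw [mul_assoc]
    _ = _ := by rw [hprod]

lemma tendsto_uppertri (A B D : ℤ) (hA : 0 < A) (hD : 0 < D)
    (hdet : 0 < (!![A, B; 0, D] : Matrix (Fin 2) (Fin 2) ℤ).det) :
    Filter.Tendsto (fun z : ℍ => (toGL !![A, B; 0, D] hdet) • z) atImInfty atImInfty := by
  rw [show atImInfty = Filter.atTop.comap UpperHalfPlane.im from rfl, Filter.tendsto_comap_iff]
  have him : ∀ z : ℍ, ((toGL !![A, B; 0, D] hdet) • z).im = ((A:ℝ)/(D:ℝ)) * z.im := by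
    intro z
    rw [show (toGL !![A, B; 0, D] hdet) • z = ((toGL !![A, B; 0, D] hdet : GL (Fin 2) ℝ)) • z
      from rfl, UpperHalfPlane.im_smul_eq_div_normSq]
    have h1 : ((toGL !![A, B; 0, D] hdet : GL (Fin 2) ℝ)).det.val = ((A*D : ℤ) : ℝ) := by
      rw [Matrix.GeneralLinearGroup.val_det_apply, toGL_coe, det_map_int, Matrix.det_fin_two_of]
      push_cast; ring
    have h2 : denom (toGL !![A, B; 0, D] hdet) z = ((D:ℝ) : ℂ) := by
      simp [denom]
    rw [h1, h2, Complex.normSq_ofReal]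
    rw [abs_of_pos (by exact_mod_cast mul_pos hA hD : (0:ℝ) < ((A*D:ℤ):ℝ))]
    have hD' : (D:ℝ) ≠ 0 := by positivity
    push_cast
    field_simp
  have : (UpperHalfPlane.im ∘ fun z : ℍ => (toGL !![A, B; 0, D] hdet) • z)
      = fun z : ℍ => ((A:ℝ)/(D:ℝ)) * z.im := funext fun z => him z
  rw [this]
  have hc : (0:ℝ) < (A:ℝ)/(D:ℝ) := by positivity
  exact Filter.Tendsto.const_mul_atTop hc Filter.tendsto_comap

lemma bdd_slash_uppertri {k : ℤ} {h : ℍ → ℂ} (hb : IsBoundedAtImInfty h) (A B D : ℤ)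
    (hA : 0 < A) (hD : 0 < D)
    (hdet : 0 < (!![A, B; 0, D] : Matrix (Fin 2) (Fin 2) ℤ).det) :
    IsBoundedAtImInfty (h ∣[k] toGL !![A, B; 0, D] hdet) := by
  have heq : (h ∣[k] toGL !![A, B; 0, D] hdet)
      = fun z => h ((toGL !![A, B; 0, D] hdet) • z) *
          (((A*D : ℤ) : ℂ) ^ (k-1) * ((D : ℂ)) ^ (-k)) := by
    funext z
    rw [slash_glpos]
    show h _ * _ * _ = _
    have h1 : ((((toGL !![A, B; 0, D] hdet : GL (Fin 2) ℝ) : Matrix (Fin 2) (Fin 2) ℝ)).det : ℂ) = ((A*D : ℤ) : ℂ) := by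
      rw [show (((toGL !![A, B; 0, D] hdet : GL (Fin 2) ℝ) : Matrix (Fin 2) (Fin 2) ℝ)) = (!![A, B; 0, D] : Matrix (Fin 2) (Fin 2) ℤ).map ((↑) : ℤ → ℝ) from rfl,
        det_map_int, Matrix.det_fin_two_of]
      push_cast; ring
    have h2 : denom (toGL !![A, B; 0, D] hdet) z = ((D : ℂ)) := by
      simp [denom]
    rw [h1, h2]
    ring
  rw [heq]
  have h1 : IsBoundedAtImInfty
      (fun z => h ((toGL !![A, B; 0, D] hdet) • z)) :=
    hb.comp_tendsto (tendsto_uppertri A B D hA hD hdet)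
  exact h1.mul (Asymptotics.isBigO_const_const
    (((A*D : ℤ) : ℂ) ^ (k-1) * ((D : ℂ)) ^ (-k)) one_ne_zero atImInfty)

lemma bdd_slash_toGL {k : ℤ} {Γ : Subgroup SL(2,ℤ)} [Γ.FiniteIndex] (f : ModularForm Γ k)
    (M : Matrix (Fin 2) (Fin 2) ℤ) (hdet : 0 < M.det) :
    IsBoundedAtImInfty (⇑f ∣[k] toGL M hdet) := by
  obtain ⟨γ, A, B, D, hA, hD, hM⟩ := hermite M hdet
  subst hM
  have hdetT : 0 < (!![A, B; 0, D] : Matrix (Fin 2) (Fin 2) ℤ).det := by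
    rw [Matrix.det_fin_two_of]; nlinarith
  have hγpos : 0 < (γ.1 : Matrix (Fin 2) (Fin 2) ℤ).det := by rw [γ.2]; norm_num
  rw [toGL_mul _ _ hγpos hdetT, ← toGL_SL γ, SlashAction.slash_mul]
  exact bdd_slash_uppertri (ModularFormClass.bdd_at_infty_slash f γ) A B D hA hD hdetT


lemma toGL_congr {M M' : Matrix (Fin 2) (Fin 2) ℤ} (hMM : M = M') (h : 0 < M.det)
    (h' : 0 < M'.det) : toGL M h = toGL M' h' := by subst hMM; rfl


def Bm (ℓ j : ℕ) : Matrix (Fin 2) (Fin 2) ℤ := !![1, (j:ℤ); 0, (ℓ:ℤ)]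
def Cm (N ℓ : ℕ) (a b : ℤ) : Matrix (Fin 2) (Fin 2) ℤ := !![(ℓ:ℤ), a; (N:ℤ), (ℓ:ℤ)*b]

def Rm (N ℓ : ℕ) (a b : ℤ) : Option (Fin ℓ) → Matrix (Fin 2) (Fin 2) ℤ
  | none => Cm N ℓ a b
  | some j => Bm ℓ j

def Del (N ℓ : ℕ) (M : Matrix (Fin 2) (Fin 2) ℤ) : Prop :=
  M.det = (ℓ:ℤ) ∧ (N:ℤ) ∣ M 1 0 ∧ (ℓ:ℤ) ∣ M 1 1

lemma mul_entry (M P : Matrix (Fin 2) (Fin 2) ℤ) (i j : Fin 2) :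
    (M * P) i j = M i 0 * P 0 j + M i 1 * P 1 j := by
  rw [Matrix.mul_apply, Fin.sum_univ_two]

section
variable {N ℓ : ℕ} {a b d : ℤ} (hℓ : ℓ.Prime) (hNd : (N:ℤ) = ℓ * d)
  (hld : ¬ (ℓ:ℤ) ∣ d) (hab : (ℓ:ℤ) * b - a * d = 1)

lemma l_two (hℓ : ℓ.Prime) : (2:ℤ) ≤ ℓ := by exact_mod_cast hℓ.two_le

include hℓ hab in
lemma hla : ¬ (ℓ:ℤ) ∣ a := by
  intro h
  have h1 : (ℓ:ℤ) ∣ 1 := by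
    rw [← hab]
    exact dvd_sub (Dvd.intro b rfl) (h.mul_right d)
  have := Int.le_of_dvd one_pos h1
  have := l_two hℓ
  omega

include hNd hab in
lemma Rm_mem_Del (i : Option (Fin ℓ)) : Del N ℓ (Rm N ℓ a b i) := by
  cases i with
  | none =>
      refine ⟨?_, ⟨1, by simp [Rm, Cm]⟩, ⟨b, by simp [Rm, Cm]⟩⟩
      simp only [Rm, Cm, Matrix.det_fin_two_of]
      rw [hNd]; linear_combination (ℓ:ℤ) * hab
  | some j =>
      exact ⟨by simp [Rm, Bm, Matrix.det_fin_two_of], ⟨0, by simp [Rm, Bm]⟩,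
        ⟨1, by simp [Rm, Bm]⟩⟩

include hNd in
lemma Del_mul (M : Matrix (Fin 2) (Fin 2) ℤ) (hM : Del N ℓ M) (δ : SL(2,ℤ))
    (hδ : d ∣ δ.1 1 0) : Del N ℓ (M * δ.1) := by
  obtain ⟨h1, h2, h3⟩ := hM
  refine ⟨by rw [Matrix.det_mul, δ.2, mul_one, h1], ?_, ?_⟩
  · rw [mul_entry]
    apply dvd_add (h2.mul_right _)
    obtain ⟨e₀, he₀⟩ := h3
    obtain ⟨r₀, hr₀⟩ := hδ
    rw [he₀, hr₀, hNd]
    exact ⟨e₀ * r₀, by ring⟩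
  · rw [mul_entry]
    have hc : (ℓ:ℤ) ∣ M 1 0 := dvd_trans ⟨d, hNd⟩ h2
    exact dvd_add (hc.mul_right _) (h3.mul_right _)

include hℓ hNd hab in
lemma disjointness (u : SL(2,ℤ)) (i i' : Option (Fin ℓ))
    (h : u.1 * Rm N ℓ a b i = Rm N ℓ a b i') : i = i' := by
  have hlpos : (0:ℤ) < ℓ := by exact_mod_cast hℓ.pos
  have hl2 := l_two hℓ
  cases i with
  | none =>
      cases i' with
      | none => rfl
      | some j' =>
          exfalso
          have h00 := congrArg (fun M => M 0 0) h
          simp only [mul_entry] at h00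
          simp [Rm, Cm, Bm] at h00
          have h1 : (ℓ:ℤ) ∣ 1 := by
            rw [← h00, hNd]
            exact dvd_add ⟨u.1 0 0, mul_comm _ _⟩ ⟨u.1 0 1 * d, by ring⟩
          have := Int.le_of_dvd one_pos h1
          omega
  | some j =>
      cases i' with
      | some j' =>
          have h00 := congrArg (fun M => M 0 0) h
          have h01 := congrArg (fun M => M 0 1) h
          simp only [mul_entry] at h00 h01
          simp [Rm, Bm] at h00 h01
          rw [h00, one_mul] at h01
          -- h01 : j + u01 * ℓ = j'
          have hj : (j:ℤ) < ℓ := by exact_mod_cast j.isLt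
          have hj' : (j':ℤ) < ℓ := by exact_mod_cast j'.isLt
          have hj0 : (0:ℤ) ≤ (j:ℤ) := Int.ofNat_nonneg _
          have hj0' : (0:ℤ) ≤ (j':ℤ) := Int.ofNat_nonneg _
          have habs : |(u.1 0 1) * ℓ| < ℓ := by
            rw [abs_lt]; omega
          rw [abs_mul, abs_of_pos hlpos] at habs
          have : |u.1 0 1| < 1 := by
            by_contra hcon
            push_neg at hcon
            nlinarith [abs_nonneg (u.1 0 1)]
          have hu0 : u.1 0 1 = 0 := by
            rw [← abs_eq_zero]; have := abs_nonneg (u.1 0 1); omega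
          rw [hu0] at h01
          have : (j:ℤ) = (j':ℤ) := by omega
          congr 1
          ext
          exact_mod_cast this
      | none =>
          exfalso
          have h00 := congrArg (fun M => M 0 0) h
          have h01 := congrArg (fun M => M 0 1) h
          simp only [mul_entry] at h00 h01
          simp [Rm, Bm, Cm] at h00 h01
          -- h00 : u00 = ℓ, h01 : u00 * j + u01 * ℓ = a
          rw [h00] at h01
          exact hla hℓ hab ⟨j + u.1 0 1, by rw [← h01]; ring⟩

end
section
variable {N ℓ : ℕ} {a b d : ℤ} (hℓ : ℓ.Prime) (hNd : (N:ℤ) = ℓ * d)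
  (hab : (ℓ:ℤ) * b - a * d = 1)

include hℓ hNd hab in
lemma decomp (M : Matrix (Fin 2) (Fin 2) ℤ) (hM : Del N ℓ M) :
    ∃ γ : SL(2,ℤ), γ ∈ Gamma0 N ∧ ∃ i : Option (Fin ℓ), M = γ.1 * Rm N ℓ a b i := by
  haveI : Fact ℓ.Prime := ⟨hℓ⟩
  obtain ⟨α, β, c, e, rfl⟩ : ∃ α β c e, M = !![α, β; c, e] := ⟨M 0 0, M 0 1, M 1 0, M 1 1, Matrix.eta_fin_two M⟩
  obtain ⟨hdet, hcN, he⟩ := hM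
  have hdet2 : α * e - β * c = (ℓ:ℤ) := by rw [← hdet, Matrix.det_fin_two_of]
  have hlne : (ℓ:ℤ) ≠ 0 := by exact_mod_cast hℓ.pos.ne'
  simp only [Matrix.cons_val', Matrix.cons_val_zero, Matrix.cons_val_one, Matrix.head_cons,
    Matrix.empty_val', Matrix.cons_val_fin_one, Matrix.head_fin_const, Matrix.of_apply] at hcN he
  have hc : (ℓ:ℤ) ∣ c := dvd_trans ⟨d, hNd⟩ hcN
  by_cases hα : (ℓ:ℤ) ∣ α
  · -- C-case
    obtain ⟨α₀, rfl⟩ := hα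
    obtain ⟨c₁, rfl⟩ := hcN
    obtain ⟨e₀, rfl⟩ := he
    have hkey : (ℓ:ℤ) * α₀ * e₀ - β * (d * c₁) = 1 := by
      apply mul_left_cancel₀ hlne
      rw [mul_one]
      linear_combination hdet2 + β * c₁ * hNd
    have hγdet : (!![(ℓ:ℤ)*α₀*b - β*d, β - α₀*a;
        (N:ℤ)*c₁*b - (ℓ:ℤ)*e₀*d, (ℓ:ℤ)*e₀ - d*c₁*a] : Matrix (Fin 2) (Fin 2) ℤ).det = 1 := by
      rw [Matrix.det_fin_two_of]
      linear_combination (-(β - α₀*a)*c₁*b)*hNd + ((ℓ:ℤ)*b - a*d)*hkey + hab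
    refine ⟨(⟨_, hγdet⟩ : SL(2,ℤ)), ?_, none, ?_⟩
    · refine Gamma0_mem.mpr ?_
      have hdd : (N:ℤ) ∣ (N:ℤ)*c₁*b - (ℓ:ℤ)*e₀*d := by
        refine dvd_sub ⟨c₁*b, by ring⟩ ⟨e₀, by rw [hNd]; ring⟩
      have : (((N:ℤ)*c₁*b - (ℓ:ℤ)*e₀*d : ℤ) : ZMod N) = 0 :=
        (ZMod.intCast_zmod_eq_zero_iff_dvd _ N).mpr hdd
      exact_mod_cast this
    · show _ = _ * Cm N ℓ a b
      rw [Cm]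
      ext i j
      fin_cases i <;> fin_cases j <;>
        simp [Matrix.mul_apply, Fin.sum_univ_two]
      · linear_combination (-(β - α₀*a))*hNd - (ℓ:ℤ)*α₀*hab
      · linear_combination -β*hab
      · linear_combination (c₁ - ((ℓ:ℤ)*e₀ - d*c₁*a))*hNd - (ℓ:ℤ)*c₁*b*hNd - (ℓ:ℤ)*d*c₁*hab
      · linear_combination (-c₁*a*b)*hNd - (ℓ:ℤ)*e₀*hab
  · -- B-case
    have hα0 : ((α : ZMod ℓ)) ≠ 0 := fun h0 => hα ((ZMod.intCast_zmod_eq_zero_iff_dvd _ _).mp h0)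
    have hjl : (((β : ZMod ℓ)) * (α : ZMod ℓ)⁻¹).val < ℓ := ZMod.val_lt _
    set j : ℕ := (((β : ZMod ℓ)) * (α : ZMod ℓ)⁻¹).val with hj'
    have hdvd : (ℓ:ℤ) ∣ β - α * (j:ℤ) := by
      rw [← ZMod.intCast_zmod_eq_zero_iff_dvd]
      push_cast
      rw [hj', ZMod.natCast_val, ZMod.cast_id]
      rw [mul_comm ((β : ZMod ℓ)) _, ← mul_assoc, mul_inv_cancel₀ hα0, one_mul, sub_self]
    obtain ⟨t, ht⟩ := hdvd
    obtain ⟨s', hs'⟩ : (ℓ:ℤ) ∣ e - c * (j:ℤ) := dvd_sub he (hc.mul_right _)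
    have hγdet : (!![α, t; c, s'] : Matrix (Fin 2) (Fin 2) ℤ).det = 1 := by
      rw [Matrix.det_fin_two_of]
      apply mul_left_cancel₀ hlne
      rw [mul_one]
      linear_combination -α*hs' + c*ht + hdet2
    refine ⟨(⟨_, hγdet⟩ : SL(2,ℤ)), ?_, some ⟨j, hjl⟩, ?_⟩
    · refine Gamma0_mem.mpr ?_
      have : ((c : ℤ) : ZMod N) = 0 := (ZMod.intCast_zmod_eq_zero_iff_dvd _ N).mpr hcN
      exact_mod_cast this
    · show _ = _ * Bm ℓ j
      rw [Bm]
      ext i j'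
      fin_cases i <;> fin_cases j' <;>
        simp [Matrix.mul_apply, Fin.sum_univ_two]
      · linear_combination ht
      · linear_combination hs'
end

lemma mdiff_sum {ι : Type*} (s : Finset ι) (F : ι → ℍ → ℂ)
    (h : ∀ i ∈ s, MDifferentiable 𝓘(ℂ) 𝓘(ℂ) (F i)) :
    MDifferentiable 𝓘(ℂ) 𝓘(ℂ) (∑ i ∈ s, F i) := by
  classical
  induction s using Finset.induction with
  | empty =>
      rw [Finset.sum_empty]
      exact fun τ => (mdifferentiableAt_const : MDifferentiableAt 𝓘(ℂ) 𝓘(ℂ) (fun _ : ℍ => (0:ℂ)) τ)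
  | insert _ _ hni ih =>
      rw [Finset.sum_insert hni]
      exact MDifferentiable.add (h _ (Finset.mem_insert_self _ _))
        (ih fun i hi => h i (Finset.mem_insert_of_mem hi))

lemma bdd_sum {ι : Type*} (s : Finset ι) (F : ι → ℍ → ℂ)
    (h : ∀ i ∈ s, IsBoundedAtImInfty (F i)) :
    IsBoundedAtImInfty (∑ i ∈ s, F i) := by
  classical
  induction s using Finset.induction with
  | empty =>
      rw [Finset.sum_empty]
      exact Asymptotics.isBigO_zero (fun _ : ℍ => (1:ℝ)) atImInfty
  | insert _ _ hni ih =>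
      rw [Finset.sum_insert hni]
      exact (h _ (Finset.mem_insert_self _ _)).add
        (ih fun i hi => h i (Finset.mem_insert_of_mem hi))

end LevelDrop

open LevelDrop

/-- for `ℓ ∥ N`, the form `U_ℓ(f) + ℓ^{k/2-1} w_ℓ(f)` of a form
`f ∈ M_k(Γ₀(N))` has level `N/ℓ`. -/
theorem Ul_add_scaled_atkinLehner_level_drop (N ℓ : ℕ) (hN : 0 < N) (hℓ : ℓ.Prime)
    (hdvd : ℓ ∣ N) (hndvd : ¬ ℓ ^ 2 ∣ N) (a b : ℤ)
    (hab : (ℓ : ℤ) * b - a * ((N / ℓ : ℕ) : ℤ) = 1) (k : ℕ)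
    (f : ModularForm (Gamma0 N) (k : ℤ)) :
    ∃ g : ModularForm (Gamma0 (N / ℓ)) (k : ℤ),
      ∀ z w : ℍ,
        (w : ℂ) = ((ℓ : ℂ) * z + (a : ℂ)) / ((N : ℂ) * z + (ℓ : ℂ) * (b : ℂ)) →
        g z = (1 / (ℓ : ℂ)) * ∑ j : Fin ℓ, f (UpperHalfPlane.shiftDiv ℓ hℓ.pos j z) +
          (ℓ : ℂ) ^ ((k : ℤ) - 1) *
            ((N : ℂ) * z + (ℓ : ℂ) * (b : ℂ)) ^ (-(k : ℤ)) * f w := by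
  classical
  haveI : NeZero N := ⟨hN.ne'⟩
  have hNd : (N:ℤ) = (ℓ:ℤ) * ((N / ℓ : ℕ) : ℤ) := by
    exact_mod_cast (Nat.mul_div_cancel' hdvd).symm
  have hab' : (ℓ:ℤ) * b - a * ((N / ℓ : ℕ) : ℤ) = 1 := hab
  have hdetR : ∀ i : Option (Fin ℓ), 0 < (Rm N ℓ a b i).det := fun i => by
    rw [(Rm_mem_Del hNd hab' i).1]; exact_mod_cast hℓ.pos
  set GLi : Option (Fin ℓ) → GL(2,ℝ)⁺ := fun i => toGL (Rm N ℓ a b i) (hdetR i) with hGLi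
  set F : ℍ → ℂ := ∑ i : Option (Fin ℓ), (⇑f ∣[(k:ℤ)] GLi i) with hF
  have hlC : ((ℓ:ℂ)) ≠ 0 := by exact_mod_cast hℓ.pos.ne'
  -- slash invariance
  have hslash : ∀ γ ∈ Gamma0 (N / ℓ), F ∣[(k:ℤ)] γ = F := by
    intro γ hγ
    have hγd : ((N / ℓ : ℕ) : ℤ) ∣ γ.1 1 0 := by
      have h0 := Gamma0_mem.mp hγ
      exact_mod_cast (ZMod.intCast_zmod_eq_zero_iff_dvd _ (N / ℓ)).mp (by exact_mod_cast h0)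
    have key : ∀ i : Option (Fin ℓ), ∃ (i' : Option (Fin ℓ)) (γ' : SL(2,ℤ)),
        γ' ∈ Gamma0 N ∧ Rm N ℓ a b i * γ.1 = γ'.1 * Rm N ℓ a b i' := by
      intro i
      obtain ⟨γ', hγ', i', hi'⟩ := decomp hℓ hNd hab' _
        (Del_mul hNd _ (Rm_mem_Del hNd hab' i) γ hγd)
      exact ⟨i', γ', hγ', hi'⟩
    choose m γ' hmem heq using key
    have hminj : Function.Injective m := by
      intro i i' hii
      have h1 := heq i
      have h2 := heq i'
      rw [hii] at h1
      apply disjointness hℓ hNd hab' (γ' i' * (γ' i)⁻¹) i i'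
      have hcan : ∀ X Y : Matrix (Fin 2) (Fin 2) ℤ, X * γ.1 = Y * γ.1 → X = Y := by
        intro X Y hXY
        have h4 : (γ.1 : Matrix (Fin 2) (Fin 2) ℤ) * (γ⁻¹).1 = 1 := by
          rw [← Matrix.SpecialLinearGroup.coe_mul, mul_inv_cancel,
            Matrix.SpecialLinearGroup.coe_one]
        calc X = X * ((γ.1 : Matrix (Fin 2) (Fin 2) ℤ) * (γ⁻¹).1) := by rw [h4, mul_one]
          _ = (X * γ.1) * (γ⁻¹).1 := by rw [mul_assoc]
          _ = (Y * γ.1) * (γ⁻¹).1 := by rw [hXY]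
          _ = Y * ((γ.1 : Matrix (Fin 2) (Fin 2) ℤ) * (γ⁻¹).1) := by rw [mul_assoc]
          _ = Y := by rw [h4, mul_one]
      apply hcan
      calc ((γ' i' * (γ' i)⁻¹).1 : Matrix (Fin 2) (Fin 2) ℤ) * Rm N ℓ a b i * γ.1
          = (γ' i' * (γ' i)⁻¹).1 * (Rm N ℓ a b i * γ.1) := by rw [mul_assoc]
        _ = (γ' i' * (γ' i)⁻¹).1 * ((γ' i).1 * Rm N ℓ a b (m i')) := by rw [h1]
        _ = ((γ' i' * (γ' i)⁻¹ * γ' i).1 : Matrix (Fin 2) (Fin 2) ℤ) * Rm N ℓ a b (m i') := by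
              simp only [Matrix.SpecialLinearGroup.coe_mul, Matrix.SpecialLinearGroup.coe_inv,
                mul_assoc]
        _ = ((γ' i').1 : Matrix (Fin 2) (Fin 2) ℤ) * Rm N ℓ a b (m i') := by
              rw [inv_mul_cancel_right]
        _ = Rm N ℓ a b i' * γ.1 := h2.symm
    have hdet2 : ∀ i : Option (Fin ℓ), 0 < (Rm N ℓ a b i * γ.1).det := fun i => by
      rw [Matrix.det_mul, γ.2, mul_one]; exact hdetR i
    have hterm : ∀ i : Option (Fin ℓ),
        (⇑f ∣[(k:ℤ)] GLi i) ∣[(k:ℤ)] (γ : GL(2,ℝ)⁺) = ⇑f ∣[(k:ℤ)] GLi (m i) := by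
      intro i
      rw [← SlashAction.slash_mul]
      have hγpos : 0 < (γ.1 : Matrix (Fin 2) (Fin 2) ℤ).det := by rw [γ.2]; norm_num
      have hγ'pos : 0 < ((γ' i).1 : Matrix (Fin 2) (Fin 2) ℤ).det := by
        rw [(γ' i).2]; norm_num
      have e1 : GLi i * (γ : GL(2,ℝ)⁺) = toGL (Rm N ℓ a b i * γ.1) (hdet2 i) := by
        rw [toGL_mul _ _ (hdetR i) hγpos, hGLi, toGL_SL γ]
      have hdet3 : 0 < ((γ' i).1 * Rm N ℓ a b (m i)).det := by rw [← heq i]; exact hdet2 i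
      have e2 : toGL (Rm N ℓ a b i * γ.1) (hdet2 i)
          = (γ' i : GL(2,ℝ)⁺) * GLi (m i) := by
        rw [toGL_congr (heq i) (hdet2 i) hdet3, toGL_mul _ _ hγ'pos (hdetR (m i)),
          toGL_SL (γ' i)]
      rw [e1, e2, SlashAction.slash_mul]
      congr 1
      rw [← SL_slash_glpos, ModularForm.SL_slash]
      exact SlashInvariantFormClass.slash_action_eq f _ (Subgroup.mem_map_of_mem _ (hmem i))
    calc F ∣[(k:ℤ)] γ = (∑ i : Option (Fin ℓ), (⇑f ∣[(k:ℤ)] GLi i)) ∣[(k:ℤ)] (γ : GL(2,ℝ)⁺) :=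
          SL_slash_glpos _ _ _
      _ = ∑ i : Option (Fin ℓ), (⇑f ∣[(k:ℤ)] GLi i) ∣[(k:ℤ)] (γ : GL(2,ℝ)⁺) :=
          sum_slash _ _ _ _
      _ = ∑ i : Option (Fin ℓ), ⇑f ∣[(k:ℤ)] GLi (m i) :=
          Finset.sum_congr rfl fun i _ => hterm i
      _ = ∑ i : Option (Fin ℓ), ⇑f ∣[(k:ℤ)] GLi i :=
          Fintype.sum_bijective m ((Finite.injective_iff_bijective).mp hminj) _ _
            (fun i => rfl)
      _ = F := rfl
  -- holomorphy
  have hholo : MDifferentiable 𝓘(ℂ) 𝓘(ℂ) F := by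
    apply mdiff_sum
    intro i _
    exact mdiff_slash f.holo' (GLi i)
  -- boundedness
  have hbdd : ∀ A : SL(2,ℤ), IsBoundedAtImInfty (F ∣[(k:ℤ)] A) := by
    intro A
    have : F ∣[(k:ℤ)] A = ∑ i : Option (Fin ℓ), (⇑f ∣[(k:ℤ)] GLi i) ∣[(k:ℤ)] (A : GL(2,ℝ)⁺) := by
      rw [SL_slash_glpos]; exact sum_slash _ _ _ _
    rw [this]
    apply bdd_sum
    intro i _
    rw [← SlashAction.slash_mul]
    have hApos : 0 < (A.1 : Matrix (Fin 2) (Fin 2) ℤ).det := by rw [A.2]; norm_num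
    have hdet4 : 0 < (Rm N ℓ a b i * A.1).det := by
      rw [Matrix.det_mul, A.2, mul_one]; exact hdetR i
    have e1 : GLi i * (A : GL(2,ℝ)⁺) = toGL (Rm N ℓ a b i * A.1) hdet4 := by
      rw [toGL_mul _ _ (hdetR i) hApos, hGLi, toGL_SL A]
    rw [e1]
    exact bdd_slash_toGL f _ _
  refine ⟨⟨⟨F, fun γg hγg => by
      obtain ⟨γ₀, hγ₀, rfl⟩ := Subgroup.mem_map.mp hγg
      exact hslash γ₀ hγ₀⟩, hholo, fun hc =>
    (OnePoint.isBoundedAt_iff_forall_SL2Z (hc.mono (Subgroup.map_le_range _ _))).mpr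
      fun A _ => hbdd A⟩, ?_⟩
  intro z w hw
  show F z = _
  have hFz : F z = ∑ i : Option (Fin ℓ), (⇑f ∣[(k:ℤ)] GLi i) z := by
    rw [hF]; exact Finset.sum_apply _ _ _
  rw [hFz, Fintype.sum_option]
  have hpow : (ℓ:ℂ) ^ ((k:ℤ)-1) * (ℓ:ℂ) ^ (-(k:ℤ)) = 1 / (ℓ:ℂ) := by
    rw [← zpow_add₀ hlC, show (k:ℤ)-1 + -(k:ℤ) = -1 by ring, _root_.zpow_neg_one, one_div]
  have hnone : (⇑f ∣[(k:ℤ)] GLi none) z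
      = (ℓ:ℂ)^((k:ℤ)-1) * ((N:ℂ)*z + (ℓ:ℂ)*b)^(-(k:ℤ)) * f w := by
    have hsm : GLi none • z = w := by
      apply UpperHalfPlane.ext
      rw [coe_glpos_smul, hw]
      simp only [num, denom, hGLi, toGL_apply]
      rw [show Rm N ℓ a b none = Cm N ℓ a b from rfl]
      simp [Cm]
      try push_cast
      try ring_nf
    have hdet5 : ((((GLi none : GL (Fin 2) ℝ) : Matrix (Fin 2) (Fin 2) ℝ)).det : ℂ) = (ℓ:ℂ) := by
      rw [hGLi]
      simp only [toGL_coe]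
      rw [det_map_int, (Rm_mem_Del hNd hab' none).1]
      push_cast; ring
    have hden : denom (GLi none) z = (N:ℂ)*z + (ℓ:ℂ)*b := by
      simp only [denom, hGLi, toGL_apply]
      rw [show Rm N ℓ a b none = Cm N ℓ a b from rfl]
      simp [Cm]
      try push_cast
      try ring
    rw [slash_glpos]
    show f (GLi none • z) * _ * _ = _
    rw [hsm, hdet5, hden]
    ring
  have hsome : ∀ j : Fin ℓ, (⇑f ∣[(k:ℤ)] GLi (some j)) z
      = (1/(ℓ:ℂ)) * f (UpperHalfPlane.shiftDiv ℓ hℓ.pos j z) := by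
    intro j
    have hsm : GLi (some j) • z = UpperHalfPlane.shiftDiv ℓ hℓ.pos j z := by
      apply UpperHalfPlane.ext
      rw [coe_glpos_smul]
      simp only [num, denom, hGLi, toGL_apply]
      rw [show Rm N ℓ a b (some j) = Bm ℓ j from rfl]
      show _ = ((z : ℂ) + (j : ℂ)) / (ℓ : ℂ)
      simp [Bm]
      try push_cast
      try ring_nf
    have hdet5 : ((((GLi (some j) : GL (Fin 2) ℝ) : Matrix (Fin 2) (Fin 2) ℝ)).det : ℂ) = (ℓ:ℂ) := by
      rw [hGLi]
      simp only [toGL_coe]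
      rw [det_map_int, (Rm_mem_Del hNd hab' (some j)).1]
      push_cast; ring
    have hden : denom (GLi (some j)) z = (ℓ:ℂ) := by
      simp only [denom, hGLi, toGL_apply]
      rw [show Rm N ℓ a b (some j) = Bm ℓ j from rfl]
      simp [Bm]
    rw [slash_glpos]
    show f (GLi (some j) • z) * _ * _ = _
    rw [hsm, hdet5, hden]
    rw [mul_assoc, hpow]
    ring
  rw [hnone, Finset.sum_congr rfl (fun j _ => hsome j), ← Finset.mul_sum]
  ring
end

section
/- Let N be a positive integer, ℓ a prime dividing N exactly once, a, b integers with ℓb − a(N/ℓ) = 1, and γ_ℓ = [[ℓ, a],[N, ℓb]]. Let k be a natural number and let f, g ∈ M_k(Γ₀(N/ℓ)) satisfy f(z) = (ℓ:ℝ)^{k/2}·(Nz+ℓb)^{−k}·g(γ_ℓ·z) for all z ∈ ℍ (i.e. f = W_ℓ g lies in M_k(Γ₀(N/ℓ)) ∩ W_ℓ(M_k(Γ₀(N/ℓ)))). Then f is a constant function. -/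
open UpperHalfPlane Complex CongruenceSubgroup MatrixGroups

set_option maxHeartbeats 1000000 in
set_option synthInstance.maxHeartbeats 400000 in
/-- a form lying in `M_k(Γ₀(N/ℓ)) ∩ W_ℓ(M_k(Γ₀(N/ℓ)))` is constant. -/
theorem mem_inter_atkinLehner_image_is_constant (N ℓ : ℕ) (hN : 0 < N) (hℓ : ℓ.Prime)
    (hdvd : ℓ ∣ N) (hndvd : ¬ ℓ ^ 2 ∣ N) (a b : ℤ)
    (hab : (ℓ : ℤ) * b - a * ((N / ℓ : ℕ) : ℤ) = 1) (k : ℕ)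
    (f g : ModularForm (Gamma0 (N / ℓ)) (k : ℤ))
    (hfg : ∀ z w : ℍ,
      (w : ℂ) = ((ℓ : ℂ) * z + (a : ℂ)) / ((N : ℂ) * z + (ℓ : ℂ) * (b : ℂ)) →
      f z = (((ℓ : ℝ) ^ ((k : ℝ) / 2) : ℝ) : ℂ) *
        ((N : ℂ) * z + (ℓ : ℂ) * (b : ℂ)) ^ (-(k : ℤ)) * g w) :
    ∃ c : ℂ, ∀ z : ℍ, f z = c := by
  classical
  revert hab f g hfg
  set M : ℕ := N / ℓ with hM
  intro hab f g hfg
  have hNM : N = ℓ * M := (Nat.mul_div_cancel' hdvd).symm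
  have hl0R : (0:ℝ) < (ℓ:ℝ) := by exact_mod_cast hℓ.pos
  have hl0 : (ℓ:ℂ) ≠ 0 := by exact_mod_cast hℓ.pos.ne'
  have hN0 : (N:ℂ) ≠ 0 := by exact_mod_cast hN.ne'
  have hNMC : (N:ℂ) = (ℓ:ℂ) * (M:ℂ) := by exact_mod_cast hNM
  have habC : (ℓ:ℂ) * (b:ℂ) - (a:ℂ) * (M:ℂ) = 1 := by exact_mod_cast hab
  set c : ℂ := (((ℓ : ℝ) ^ ((k : ℝ) / 2) : ℝ) : ℂ) with hcdef
  have hc : c ≠ 0 := by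
    rw [hcdef]
    exact_mod_cast (Real.rpow_pos_of_pos hl0R _).ne'
  have hlin : ∀ (x y : ℝ) (z : ℍ), (x ≠ 0 ∨ y ≠ 0) → (x:ℂ) * z + y ≠ 0 := by
    intro x y z h
    have hne : ![x, y] ≠ 0 := by
      intro h0
      rcases h with h | h
      · exact h (by simpa using congr_fun h0 0)
      · exact h (by simpa using congr_fun h0 1)
    simpa using UpperHalfPlane.linear_ne_zero (cd := ![x, y]) z hne
  -- group elements
  have hdetδ : (!![b, -a; -(M:ℤ), (ℓ:ℤ)]).det = 1 := by
    simp [Matrix.det_fin_two_of]; linarith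
  set δ : SL(2,ℤ) := ⟨_, hdetδ⟩ with hδ
  have hδmem : δ ∈ Gamma0 M := by rw [Gamma0_mem]; simp [hδ]
  have hdetL : (!![1, 0; (M:ℤ), 1]).det = 1 := by simp [Matrix.det_fin_two_of]
  set L : SL(2,ℤ)  := ⟨_, hdetL⟩ with hL
  have hLmem : L ∈ Gamma0 M := by rw [Gamma0_mem]; simp [hL]
  have hdetT : (!![1, 1; 0, 1] : Matrix (Fin 2) (Fin 2) ℤ).det = 1 := by
    simp [Matrix.det_fin_two_of]
  set T : SL(2,ℤ) := ⟨_, hdetT⟩ with hT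
  have hTmem : T ∈ Gamma0 M := by rw [Gamma0_mem]; simp [hT]
  have hu : IsUnit (!![(ℓ:ℝ), (a:ℝ); (N:ℝ), (ℓ:ℝ)*(b:ℝ)]).det := by
    have hNR : (N:ℝ) = (ℓ:ℝ) * (M:ℝ) := by exact_mod_cast hNM
    have h2 : (ℓ:ℝ) * (b:ℝ) - (a:ℝ) * (M:ℝ) = 1 := by exact_mod_cast hab
    have hdetG : (!![(ℓ:ℝ), (a:ℝ); (N:ℝ), (ℓ:ℝ)*(b:ℝ)]).det = (ℓ:ℝ) := by
      simp [Matrix.det_fin_two_of, hNR]; nlinarith [h2]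
    rw [hdetG]; exact isUnit_iff_ne_zero.2 hl0R.ne'
  set G0 : GL (Fin 2) ℝ := Matrix.GeneralLinearGroup.mk'' _ hu with hG0
  have hGm : G0 ∈ Matrix.GLPos (Fin 2) ℝ := by
    rw [Matrix.mem_glpos]
    have h : (Matrix.GeneralLinearGroup.det G0 : ℝ)
        = (!![(ℓ:ℝ), (a:ℝ); (N:ℝ), (ℓ:ℝ)*(b:ℝ)]).det := by
      rw [Matrix.GeneralLinearGroup.val_det_apply]; rfl
    rw [h]
    have hNR : (N:ℝ) = (ℓ:ℝ) * (M:ℝ) := by exact_mod_cast hNM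
    have h2 : (ℓ:ℝ) * (b:ℝ) - (a:ℝ) * (M:ℝ) = 1 := by exact_mod_cast hab
    have hdetG : (!![(ℓ:ℝ), (a:ℝ); (N:ℝ), (ℓ:ℝ)*(b:ℝ)]).det = (ℓ:ℝ) := by
      simp [Matrix.det_fin_two_of, hNR]; nlinarith [h2]
    rw [hdetG]; exact hl0R
  set G : GL(2,ℝ)⁺ := (⟨G0, hGm⟩ : GL(2,ℝ)⁺) with hG
  have hG00 : ((G : GL (Fin 2) ℝ) 0 0 : ℝ) = (ℓ:ℝ) := by rw [hG]; rfl
  have hG01 : ((G : GL (Fin 2) ℝ) 0 1 : ℝ) = (a:ℝ) := by rw [hG]; rfl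
  have hG10 : ((G : GL (Fin 2) ℝ) 1 0 : ℝ) = (N:ℝ) := by rw [hG]; rfl
  have hG11 : ((G : GL (Fin 2) ℝ) 1 1 : ℝ) = (ℓ:ℝ)*(b:ℝ) := by rw [hG]; rfl
  -- KEY LEMMA
  have hKey : ∀ (z v : ℍ), (v:ℂ) = ((z:ℂ) - (a:ℂ)*(ℓ:ℂ)) / (ℓ:ℂ)^2 →
      f v = (ℓ:ℂ)^k * f z := by
    intro z v hv
    have hV : (v:ℂ) * (ℓ:ℂ)^2 = (z:ℂ) - (a:ℂ)*(ℓ:ℂ) := by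
      rw [hv]
      exact div_mul_cancel₀ _ (pow_ne_zero 2 hl0)
    have hd1 : -(M:ℂ) * (z:ℂ) + (ℓ:ℂ) ≠ 0 := by
      have := hlin (-(M:ℝ)) (ℓ:ℝ) z (Or.inr hl0R.ne')
      push_cast at this ⊢; exact this
    have hd5 : (M:ℂ) * (z:ℂ) + (ℓ:ℂ) ≠ 0 := by
      have := hlin ((M:ℝ)) (ℓ:ℝ) z (Or.inr hl0R.ne')
      push_cast at this ⊢; exact this
    set u₁ : ℍ := δ • z with hu₁def
    have hu₁ : (u₁:ℂ) = ((b:ℂ) * (z:ℂ) - (a:ℂ)) / (-(M:ℂ) * (z:ℂ) + (ℓ:ℂ)) := by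
      rw [hu₁def, UpperHalfPlane.specialLinearGroup_apply]
      simp [hδ]
      ring_nf
    have h1 : (u₁:ℂ) * (-(M:ℂ) * (z:ℂ) + (ℓ:ℂ)) = (b:ℂ) * (z:ℂ) - (a:ℂ) := by
      rw [hu₁]; exact div_mul_cancel₀ _ hd1
    have hd2eq : ((N:ℂ) * (u₁:ℂ) + (ℓ:ℂ)*(b:ℂ)) * (-(M:ℂ) * (z:ℂ) + (ℓ:ℂ)) = (ℓ:ℂ) := by
      linear_combination (N:ℂ)*h1 + ((b:ℂ)*(z:ℂ) - (a:ℂ))*hNMC + (ℓ:ℂ)*habC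
    have hd2ne : (N:ℂ) * (u₁:ℂ) + (ℓ:ℂ)*(b:ℂ) ≠ 0 := by
      intro h; rw [h, zero_mul] at hd2eq; exact hl0 hd2eq.symm
    set u₂ : ℍ := G • u₁ with hu₂def
    have hu₂cond : (u₂:ℂ) = ((ℓ:ℂ) * (u₁:ℂ) + (a:ℂ)) / ((N:ℂ) * (u₁:ℂ) + (ℓ:ℂ)*(b:ℂ)) := by
      rw [hu₂def, Subgroup.smul_def, UpperHalfPlane.coe_smul_of_det_pos ((Matrix.mem_glpos _).1 G.2), UpperHalfPlane.num, UpperHalfPlane.denom,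
        hG00, hG01, hG10, hG11]
      push_cast
      ring_nf
    have h2 : (u₂:ℂ) * ((N:ℂ) * (u₁:ℂ) + (ℓ:ℂ)*(b:ℂ)) = (ℓ:ℂ) * (u₁:ℂ) + (a:ℂ) := by
      rw [hu₂cond]; exact div_mul_cancel₀ _ hd2ne
    have h2' : (u₂:ℂ) * (ℓ:ℂ) = (z:ℂ) := by
      linear_combination (-((u₂:ℂ):ℂ))*hd2eq + (-(M:ℂ) * (z:ℂ) + (ℓ:ℂ))*h2 + (ℓ:ℂ)*h1 + (z:ℂ)*habC
    set u₃ : ℍ := L • u₂ with hu₃def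
    have hd3ne : (M:ℂ) * (u₂:ℂ) + 1 ≠ 0 := by
      have := hlin ((M:ℝ)) 1 u₂ (Or.inr one_ne_zero)
      push_cast at this ⊢; exact this
    have hu₃ : (u₃:ℂ) = (u₂:ℂ) / ((M:ℂ) * (u₂:ℂ) + 1) := by
      rw [hu₃def, UpperHalfPlane.specialLinearGroup_apply]
      simp [hL]
    have h3 : (u₃:ℂ) * ((M:ℂ) * (u₂:ℂ) + 1) = (u₂:ℂ) := by
      rw [hu₃]; exact div_mul_cancel₀ _ hd3ne
    have h3' : (u₃:ℂ) * ((M:ℂ) * (z:ℂ) + (ℓ:ℂ)) = (z:ℂ) := by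
      linear_combination (ℓ:ℂ)*h3 + (1 - (u₃:ℂ)*(M:ℂ))*h2'
    have hd4eq : ((N:ℂ) * (v:ℂ) + (ℓ:ℂ)*(b:ℂ)) * (ℓ:ℂ) = (M:ℂ) * (z:ℂ) + (ℓ:ℂ) := by
      linear_combination ((v:ℂ)*(ℓ:ℂ))*hNMC + (M:ℂ)*hV + (ℓ:ℂ)*habC
    have hd4ne : (N:ℂ) * (v:ℂ) + (ℓ:ℂ)*(b:ℂ) ≠ 0 := by
      intro h; rw [h, zero_mul] at hd4eq; exact hd5 hd4eq.symm
    -- the two hfg instances and two modularity instances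
    have eq1 : f u₁ = c * ((N:ℂ) * (u₁:ℂ) + (ℓ:ℂ)*(b:ℂ)) ^ (-(k:ℤ)) * g u₂ :=
      hfg u₁ u₂ hu₂cond
    have eq4 : f v = c * ((N:ℂ) * (v:ℂ) + (ℓ:ℂ)*(b:ℂ)) ^ (-(k:ℤ)) * g u₃ := by
      refine hfg v u₃ ?_
      rw [eq_div_iff hd4ne]
      have hmul : ((u₃:ℂ) * ((N:ℂ)*(v:ℂ) + (ℓ:ℂ)*(b:ℂ)) - ((ℓ:ℂ)*(v:ℂ) + (a:ℂ))) * (ℓ:ℂ) = 0 := by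
        linear_combination (u₃:ℂ)*hd4eq + h3' - hV
      rcases mul_eq_zero.mp hmul with h | h
      · linear_combination h
      · exact absurd h hl0
    have eq2 : f u₁ = (-(M:ℂ) * (z:ℂ) + (ℓ:ℂ))^(k:ℕ) * f z := by
      have := SlashInvariantForm.slash_action_eqn_SL'' f hδmem z
      rw [← hu₁def] at this
      rw [this]
      congr 1
      simp [UpperHalfPlane.denom, Matrix.SpecialLinearGroup.map_apply_coe, RingHom.mapMatrix_apply, Matrix.map_apply]
      simp [hδ]
    have eq3 : g u₃ = ((M:ℂ) * (u₂:ℂ) + 1)^(k:ℕ) * g u₂ := by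
      have := SlashInvariantForm.slash_action_eqn_SL'' g hLmem u₂
      rw [← hu₃def] at this
      rw [this]
      congr 1
      simp [UpperHalfPlane.denom, Matrix.SpecialLinearGroup.map_apply_coe, RingHom.mapMatrix_apply, Matrix.map_apply]
      simp [hL]
    -- combine
    have hXB : ((N:ℂ) * (u₁:ℂ) + (ℓ:ℂ)*(b:ℂ))^(k:ℕ) * (-(M:ℂ) * (z:ℂ) + (ℓ:ℂ))^(k:ℕ)
        = (ℓ:ℂ)^k := by rw [← mul_pow, hd2eq]
    have hX0 : ((N:ℂ) * (u₁:ℂ) + (ℓ:ℂ)*(b:ℂ))^(k:ℕ) ≠ 0 := pow_ne_zero _ hd2ne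
    have hB : (-(M:ℂ) * (z:ℂ) + (ℓ:ℂ))^(k:ℕ) ≠ 0 := pow_ne_zero _ hd1
    have e : (((N:ℂ) * (u₁:ℂ) + (ℓ:ℂ)*(b:ℂ))^(k:ℕ))⁻¹
        = (-(M:ℂ) * (z:ℂ) + (ℓ:ℂ))^(k:ℕ) / (ℓ:ℂ)^k := by
      rw [eq_div_iff (pow_ne_zero _ hl0), inv_mul_eq_div, div_eq_iff hX0]
      linear_combination -hXB
    rw [zpow_neg, zpow_natCast, e, eq2] at eq1
    have hgu₂ : c * g u₂ = (ℓ:ℂ)^k * f z := by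
      have hl0k : ((ℓ:ℂ))^k ≠ 0 := pow_ne_zero _ hl0
      field_simp at eq1
      have h6 : (-(M:ℂ) * (z:ℂ) + (ℓ:ℂ))^(k:ℕ) * ((ℓ:ℂ)^k * f z)
          = (-(M:ℂ) * (z:ℂ) + (ℓ:ℂ))^(k:ℕ) * (c * g u₂) := by
        linear_combination eq1
      exact (mul_left_cancel₀ hB h6).symm
    have e4 : ((N:ℂ) * (v:ℂ) + (ℓ:ℂ)*(b:ℂ)) ^ (-(k:ℤ))
        = (((M:ℂ) * (u₂:ℂ) + 1)^(k:ℕ))⁻¹ := by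
      rw [zpow_neg, zpow_natCast]
      have hd3eq : ((M:ℂ) * (u₂:ℂ) + 1) * (ℓ:ℂ) = (M:ℂ)*(z:ℂ) + (ℓ:ℂ) := by
        linear_combination (M:ℂ)*h2'
      have h5 : ((N:ℂ) * (v:ℂ) + (ℓ:ℂ)*(b:ℂ)) * (ℓ:ℂ) = ((M:ℂ) * (u₂:ℂ) + 1) * (ℓ:ℂ) := by
        rw [hd4eq, hd3eq]
      rw [mul_right_cancel₀ hl0 h5]
    rw [e4, eq3] at eq4
    have h30 : ((M:ℂ) * (u₂:ℂ) + 1)^(k:ℕ) ≠ 0 := pow_ne_zero _ hd3ne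
    rw [eq4]
    have harr : c * ((((M:ℂ) * (u₂:ℂ) + 1)^(k:ℕ))⁻¹ * (((M:ℂ) * (u₂:ℂ) + 1)^(k:ℕ) * g u₂))
        = c * g u₂ := by
      rw [inv_mul_cancel_left₀ h30]
    calc c * (((M:ℂ) * (u₂:ℂ) + 1)^(k:ℕ))⁻¹ * (((M:ℂ) * (u₂:ℂ) + 1)^(k:ℕ) * g u₂)
        = c * g u₂ := by rw [← harr]; ring
      _ = (ℓ:ℂ)^k * f z := hgu₂
  -- translation by 1
  have hTrans : ∀ (z v : ℍ), (v:ℂ) = (z:ℂ) + 1 → f v = f z := by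
    intro z v hv
    have hveq : v = T • z := by
      apply UpperHalfPlane.ext
      rw [hv, UpperHalfPlane.specialLinearGroup_apply]
      simp [hT]
    have := SlashInvariantForm.slash_action_eqn_SL'' f hTmem z
    rw [hveq, this]
    simp [UpperHalfPlane.denom, Matrix.SpecialLinearGroup.map_apply_coe, RingHom.mapMatrix_apply, Matrix.map_apply]
    simp [hT]
  -- dividing a translation period by ℓ²
  have hStep : ∀ t : ℝ, (∀ z v : ℍ, (v:ℂ) = (z:ℂ) + (t:ℂ) → f v = f z) →
      (∀ z v : ℍ, (v:ℂ) = (z:ℂ) + ((t / (ℓ:ℝ)^2 : ℝ) : ℂ) → f v = f z) := by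
    intro t ht z v hv
    have him : ∀ r : ℝ, (0:ℝ) < ((ℓ:ℂ)^2 * (z:ℂ) + (a:ℂ)*(ℓ:ℂ) + (r:ℂ)).im := by
      intro r
      have h1 : ((ℓ:ℂ)^2 * (z:ℂ) + (a:ℂ)*(ℓ:ℂ) + (r:ℂ)).im = (ℓ:ℝ)^2 * z.im := by
        have hcast : ((ℓ:ℂ)^2 * (z:ℂ) + (a:ℂ)*(ℓ:ℂ) + (r:ℂ))
            = (((ℓ:ℝ)^2 : ℝ):ℂ) * (z:ℂ) + ((((a:ℝ)*(ℓ:ℝ) + r) : ℝ):ℂ) := by push_cast; ring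
        rw [hcast, Complex.add_im, Complex.im_ofReal_mul, Complex.ofReal_im, add_zero]
        rfl
      rw [h1]
      have := z.im_pos
      positivity
    set u : ℍ := ⟨_, him 0⟩ with hu
    set u' : ℍ := ⟨_, him t⟩ with hu'
    have hcu : (u:ℂ) = (ℓ:ℂ)^2 * (z:ℂ) + (a:ℂ)*(ℓ:ℂ) + ((0:ℝ):ℂ) := rfl
    have hcu' : (u':ℂ) = (ℓ:ℂ)^2 * (z:ℂ) + (a:ℂ)*(ℓ:ℂ) + ((t:ℝ):ℂ) := rfl
    have hz' : (z:ℂ) = ((u:ℂ) - (a:ℂ)*(ℓ:ℂ)) / (ℓ:ℂ)^2 := by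
      rw [hcu]
      field_simp
      push_cast; ring
    have hv' : (v:ℂ) = ((u':ℂ) - (a:ℂ)*(ℓ:ℂ)) / (ℓ:ℂ)^2 := by
      rw [hcu', hv]
      push_cast
      field_simp
      ring
    have h1 := hKey u' v hv'
    have h2 := hKey u z hz'
    have h3 : f u' = f u := ht u u' (by rw [hcu', hcu]; push_cast; ring)
    rw [h1, h3, ← h2]
  -- all periods 1/ℓ^(2n)
  have hq0 : (0:ℝ) ≤ 1/(ℓ:ℝ)^2 := by positivity
  have hq1 : 1/(ℓ:ℝ)^2 < 1 := by
    rw [div_lt_one (by positivity)]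
    have : (1:ℝ) < (ℓ:ℝ) := by exact_mod_cast hℓ.one_lt
    nlinarith
  have hPow : ∀ n : ℕ, ∀ z v : ℍ, (v:ℂ) = (z:ℂ) + (((1/(ℓ:ℝ)^2)^n : ℝ) : ℂ) → f v = f z := by
    intro n
    induction n with
    | zero => intro z v hv; exact hTrans z v (by rw [hv]; norm_num)
    | succ n ih =>
      have := hStep ((1/(ℓ:ℝ)^2)^n) ih
      intro z v hv
      refine this z v ?_
      rw [hv]
      congr 1
      norm_cast
      rw [pow_succ]
      field_simp
  -- analytic continuation: f is constant
  have hUo : IsOpen {s : ℂ | 0 < s.im} := by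
    exact isOpen_lt continuous_const Complex.continuous_im
  have hUc : IsPreconnected {s : ℂ | 0 < s.im} := (convex_halfSpace_im_gt 0).isPreconnected
  have hAn : AnalyticOnNhd ℂ (⇑f ∘ ofComplex) {s : ℂ | 0 < s.im} :=
    DifferentiableOn.analyticOnNhd
      (fun s hs => (UpperHalfPlane.mdifferentiableAt_iff.mp (ModularFormClass.holo f ⟨s, hs⟩)).differentiableWithinAt)
      hUo
  have hIm : Complex.I ∈ {s : ℂ | 0 < s.im} := by simp
  have htend0 : Filter.Tendsto (fun n : ℕ => ((1/(ℓ:ℝ)^2)^n : ℝ)) Filter.atTop (nhds 0) :=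
    tendsto_pow_atTop_nhds_zero_of_lt_one hq0 hq1
  have htend : Filter.Tendsto (fun n : ℕ => Complex.I + (((1/(ℓ:ℝ)^2)^n : ℝ) : ℂ))
      Filter.atTop (nhdsWithin Complex.I {s : ℂ | s ≠ Complex.I}) := by
    apply tendsto_nhdsWithin_of_tendsto_nhds_of_eventually_within
    · have : Filter.Tendsto (fun n : ℕ => (((1/(ℓ:ℝ)^2)^n : ℝ) : ℂ)) Filter.atTop (nhds 0) := by
        rw [show ((0:ℂ)) = ((0:ℝ):ℂ) by norm_num]
        exact (Complex.continuous_ofReal.tendsto 0).comp htend0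
      have h2 := this.const_add Complex.I
      simpa using h2
    · refine Filter.Eventually.of_forall (fun n => ?_)
      simp only [Set.mem_setOf_eq]
      intro hcon
      have : (((1/(ℓ:ℝ)^2)^n : ℝ) : ℂ) = 0 := by
        have := congrArg (· - Complex.I) hcon
        simpa using this
      have h0 : ((1/(ℓ:ℝ)^2)^n : ℝ) = 0 := by exact_mod_cast this
      have : (0:ℝ) < (1/(ℓ:ℝ)^2)^n := by positivity
      rw [h0] at this
      exact lt_irrefl 0 this
  have hseq : ∀ n : ℕ, (⇑f ∘ ofComplex) (Complex.I + (((1/(ℓ:ℝ)^2)^n : ℝ) : ℂ))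
      = (fun _ => f UpperHalfPlane.I) (Complex.I + (((1/(ℓ:ℝ)^2)^n : ℝ) : ℂ)) := by
    intro n
    have him : 0 < (Complex.I + (((1/(ℓ:ℝ)^2)^n : ℝ) : ℂ)).im := by
      rw [Complex.add_im, Complex.I_im, Complex.ofReal_im]
      norm_num
    simp only [Function.comp_apply, ofComplex_apply_of_im_pos him]
    exact hPow n UpperHalfPlane.I ⟨_, him⟩ rfl
  have hfreq : ∃ᶠ s in (nhdsWithin Complex.I {s : ℂ | s ≠ Complex.I}),
      (⇑f ∘ ofComplex) s = (fun _ => f UpperHalfPlane.I) s :=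
    htend.frequently (Filter.Frequently.of_forall hseq)
  have hEq := hAn.eqOn_of_preconnected_of_frequently_eq analyticOnNhd_const hUc hIm hfreq
  refine ⟨f UpperHalfPlane.I, fun z => ?_⟩
  have hz : (z:ℂ) ∈ {s : ℂ | 0 < s.im} := z.im_pos
  have := hEq hz
  simpa [Function.comp_apply, ofComplex_apply] using this
end

section
/- Let N be a positive integer, ℓ a prime dividing N exactly once, a, b integers with ℓb − a(N/ℓ) = 1, and γ_ℓ = [[ℓ, a],[N, ℓb]]. Let k > 0 be a natural number and let f, g ∈ M_k(Γ₀(N/ℓ)) satisfy f(z) = ℓ^{k}·(Nz+ℓb)^{−k}·g(γ_ℓ·z) for all z ∈ ℍ (i.e. f lies in M_k(Γ₀(N/ℓ)) ∩ W_ℓ(M_k(Γ₀(N/ℓ))), with the Atkin–Lehner operator scaled so W_ℓ = ℓ^{k/2}w_ℓ). Then f = 0 and g = 0; in particular, for k > 0 the sum M_k(Γ₀(N/ℓ)) + W_ℓ(M_k(Γ₀(N/ℓ))) is direct. -/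
open UpperHalfPlane Complex CongruenceSubgroup MatrixGroups Matrix

noncomputable def UHtr (τ : ℍ) (r : ℝ) : ℍ := UpperHalfPlane.mk ((τ : ℂ) + (r : ℂ)) (by simpa using τ.2)

@[simp] lemma UHtr_coe (τ : ℍ) (r : ℝ) : (UHtr τ r : ℂ) = (τ : ℂ) + (r : ℂ) := rfl

noncomputable def UHsc (c : ℝ) (hc : 0 < c) (τ : ℍ) : ℍ :=
  UpperHalfPlane.mk ((c : ℂ) * (τ : ℂ)) (by
    have h : ((c : ℂ) * (τ : ℂ)).im = c * (τ : ℂ).im := by simp [Complex.mul_im]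
    rw [h]; exact mul_pos hc τ.2)

@[simp] lemma UHsc_coe (c : ℝ) (hc : 0 < c) (τ : ℍ) : (UHsc c hc τ : ℂ) = (c : ℂ) * (τ : ℂ) := rfl

lemma modform_eqn {M : ℕ} {k : ℤ} (f : ModularForm (Gamma0 M) k)
    (p q r s : ℤ) (hdet : p * s - q * r = 1) (hr : (M : ℤ) ∣ r) (z w : ℍ)
    (hw : (w : ℂ) = ((p : ℂ) * z + q) / ((r : ℂ) * z + s)) :
    f w = ((r : ℂ) * z + s) ^ k * f z := by
  set γ : SL(2,ℤ) := ⟨!![p, q; r, s], by simp [Matrix.det_fin_two_of]; linarith⟩ with hγdef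
  have hγ : γ ∈ Gamma0 M := by
    rw [Gamma0_mem]
    simp [hγdef]
    exact_mod_cast (ZMod.intCast_zmod_eq_zero_iff_dvd r M).mpr hr
  have h1 : w = γ • z := by
    ext
    rw [specialLinearGroup_apply]
    simp [hγdef, hw]
  have h2 := SlashInvariantForm.slash_action_eqn_SL'' f hγ z
  rw [h1, h2]
  congr 2

lemma pt_pos (p q r s : ℤ) (hdet : p * s - q * r = 1) (τ : ℍ) :
    0 < ((((p : ℂ) * τ + q) / ((r : ℂ) * τ + s)).im) := by
  set γ : SL(2,ℤ) := ⟨!![p, q; r, s], by simp [Matrix.det_fin_two_of]; linarith⟩ with hγdef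
  have h1 : ((γ • τ : ℍ) : ℂ) = ((p : ℂ) * τ + q) / ((r : ℂ) * τ + s) := by
    rw [specialLinearGroup_apply]
    simp [hγdef]
  rw [← h1]
  exact (γ • τ).2


lemma modform_eqn' {M : ℕ} {k : ℤ} (f : ModularForm (Gamma0 M) k)
    (p q r s : ℤ) (pc qc rc sc : ℂ) (hp : pc = (p:ℂ)) (hq : qc = (q:ℂ))
    (hr : rc = (r:ℂ)) (hs : sc = (s:ℂ))
    (hdet : p * s - q * r = 1) (hdvd : (M : ℤ) ∣ r) (z w : ℍ)
    (hw : (w : ℂ) = (pc * z + qc) / (rc * z + sc)) :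
    f w = (rc * z + sc) ^ k * f z := by
  subst hp hq hr hs
  exact modform_eqn f p q r s hdet hdvd z w hw

lemma pt_pos' (p q r s : ℤ) (pc qc rc sc : ℂ) (hp : pc = (p:ℂ)) (hq : qc = (q:ℂ))
    (hr : rc = (r:ℂ)) (hs : sc = (s:ℂ)) (hdet : p * s - q * r = 1) (τ : ℍ) :
    0 < (((pc * τ + qc) / (rc * τ + sc)).im) := by
  subst hp hq hr hs
  exact pt_pos p q r s hdet τ

theorem aux_atkinLehner (M ℓ : ℕ) (hM0 : 0 < M) (hℓ : ℓ.Prime) (hlM : ¬ ℓ ∣ M)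
    (a b : ℤ) (habM : (ℓ : ℤ) * b - a * (M : ℤ) = 1) (k : ℕ) (hk : 0 < k)
    (f g : ModularForm (Gamma0 M) (k : ℤ))
    (hfg : ∀ z w : ℍ,
      (w : ℂ) = ((ℓ : ℂ) * z + (a : ℂ)) / (((ℓ*M : ℕ) : ℂ) * z + (ℓ : ℂ) * (b : ℂ)) →
      f z = (ℓ : ℂ) ^ (k : ℤ) *
        (((ℓ*M : ℕ) : ℂ) * z + (ℓ : ℂ) * (b : ℂ)) ^ (-(k : ℤ)) * g w) :
    f = 0 ∧ g = 0 := by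
  have hℓ2 : 2 ≤ ℓ := hℓ.two_le
  have hℓR : (0:ℝ) < (ℓ:ℝ) := by positivity
  have hℓRne : (ℓ:ℝ) ≠ 0 := hℓR.ne'
  have hℓC : (ℓ:ℂ) ≠ 0 := Nat.cast_ne_zero.mpr (by omega)
  -- Step A : f z = ℓ^k g(ℓ z)
  have hrel : ∀ z : ℍ, f z = (ℓ : ℂ) ^ (k : ℤ) * g (UHsc (ℓ:ℝ) hℓR z) := by
    intro z
    set y : ℍ := UHsc (ℓ:ℝ) hℓR z with hydef
    have hy : (y : ℂ) = (ℓ : ℂ) * z := by rw [hydef, UHsc_coe]; norm_num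
    set D : ℂ := ((ℓ*M : ℕ) : ℂ) * z + (ℓ : ℂ) * (b : ℂ) with hDdef
    have hDim : D.im = ((ℓ*M : ℕ) : ℝ) * (z:ℂ).im := by
      simp [hDdef, Complex.add_im, Complex.mul_im]
    have hDne : D ≠ 0 := by
      intro h
      rw [h] at hDim
      have h2 : (0:ℝ) < ((ℓ*M:ℕ):ℝ) * (z:ℂ).im :=
        mul_pos (by positivity) z.2
      rw [← hDim] at h2; simp at h2
    have hwpos : 0 < (((ℓ:ℂ) * z + (a:ℂ)) / D).im := by
      have h1 := pt_pos 1 a (M:ℤ) ((ℓ:ℤ)*b) (by linear_combination habM) y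
      have h2 : (((1:ℤ):ℂ) * y + ((a:ℤ):ℂ)) / ((((M:ℕ):ℤ):ℂ) * y + (((ℓ:ℤ)*b : ℤ):ℂ))
          = ((ℓ:ℂ) * z + (a:ℂ)) / D := by
        rw [hy, hDdef]
        push_cast
        ring_nf
      rwa [h2] at h1
    set w : ℍ := UpperHalfPlane.mk (((ℓ:ℂ) * z + (a:ℂ)) / D) hwpos with hwdef
    have h0 := hfg z w rfl
    have h1 := modform_eqn g 1 a (M:ℤ) ((ℓ:ℤ)*b) (by linear_combination habM) dvd_rfl y w
      (by
        rw [hwdef, UpperHalfPlane.coe_mk, hy, hDdef]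
        push_cast
        ring_nf)
    have hDD : ((((M:ℕ):ℤ):ℂ) * y + (((ℓ:ℤ)*b : ℤ):ℂ)) = D := by
      rw [hy, hDdef]; push_cast; ring
    rw [h0, h1, hDD]
    rw [show (ℓ:ℂ)^(k:ℤ) * D^(-(k:ℤ)) * (D^(k:ℤ) * g y) =
        (ℓ:ℂ)^(k:ℤ) * ((D^(-(k:ℤ)) * D^(k:ℤ)) * g y) by ring,
      _root_.zpow_neg, inv_mul_cancel₀ (zpow_ne_zero _ hDne), one_mul]
  -- integer periods
  have hTf : ∀ (c : ℤ) (τ : ℍ), f (UHtr τ (c:ℝ)) = f τ := by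
    intro c τ
    have h := modform_eqn f 1 c 0 1 (by ring) ⟨0, by ring⟩ τ (UHtr τ (c:ℝ))
      (by rw [UHtr_coe]; push_cast; ring)
    simpa using h
  have hTg : ∀ (c : ℤ) (τ : ℍ), g (UHtr τ (c:ℝ)) = g τ := by
    intro c τ
    have h := modform_eqn g 1 c 0 1 (by ring) ⟨0, by ring⟩ τ (UHtr τ (c:ℝ))
      (by rw [UHtr_coe]; push_cast; ring)
    simpa using h
  -- Step C : period 1/ℓ for f
  have hTl : ∀ τ : ℍ, f (UHtr τ ((ℓ:ℝ)⁻¹)) = f τ := by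
    intro τ
    have h1 := hrel (UHtr τ ((ℓ:ℝ)⁻¹))
    have h2 : UHsc (ℓ:ℝ) hℓR (UHtr τ ((ℓ:ℝ)⁻¹)) = UHtr (UHsc (ℓ:ℝ) hℓR τ) ((1:ℤ):ℝ) := by
      ext
      rw [UHsc_coe, UHtr_coe, UHtr_coe, UHsc_coe]
      push_cast
      field_simp
    rw [h1, h2, hTg 1 (UHsc (ℓ:ℝ) hℓR τ), ← hrel τ]
  -- Bezout for M+ℓ and M*ℓ
  have hcopN : Nat.Coprime ℓ M := (Nat.Prime.coprime_iff_not_dvd hℓ).mpr hlM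
  have h1 : IsCoprime (ℓ:ℤ) (M:ℤ) := by
    rw [Int.isCoprime_iff_gcd_eq_one]
    simpa using hcopN
  have h2 : IsCoprime ((M:ℤ) + ℓ) (M:ℤ) := by
    have := (h1.add_mul_left_left 1)
    simpa [mul_one, add_comm] using this
  have h3 : IsCoprime ((M:ℤ) + ℓ) (ℓ:ℤ) := by
    have := (h1.symm.add_mul_left_left 1)
    simpa [mul_one] using this
  obtain ⟨u, v, huv⟩ := h2.mul_right h3
  have hBez : (u:ℂ) * ((M:ℂ) + ℓ) + (v:ℂ) * ((M:ℂ) * ℓ) = 1 := by exact_mod_cast huv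
  have hℓ2R : (0:ℝ) < (ℓ:ℝ)^2 := by positivity
  -- Step D : key dilation identity
  have hkey : ∀ τ : ℍ, f τ = (ℓ:ℂ)^(k:ℤ) * f (UHsc ((ℓ:ℝ)^2) hℓ2R τ) := by
    intro τ
    have hdet1 : ((M:ℤ) + ℓ) * u - v * (-((M:ℤ)*ℓ)) = 1 := by linear_combination huv
    have hMC : ((M:ℂ) + (ℓ:ℂ)) = (((M:ℤ) + ℓ : ℤ) : ℂ) := by push_cast; ring
    have hvC : ((v:ℂ)) = (((v:ℤ)):ℂ) := rfl
    have hrC : (-((M:ℂ)*(ℓ:ℂ))) = (((-((M:ℤ)*ℓ)) : ℤ) : ℂ) := by push_cast; ring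
    have huC : ((u:ℂ)) = (((u:ℤ)):ℂ) := rfl
    have h1pos := pt_pos' ((M:ℤ) + ℓ) v (-((M:ℤ)*ℓ)) u
      ((M:ℂ) + (ℓ:ℂ)) (v:ℂ) (-((M:ℂ)*(ℓ:ℂ))) (u:ℂ) hMC hvC hrC huC hdet1 τ
    set z₁ : ℍ := UpperHalfPlane.mk _ h1pos with hz₁def
    have e1 : f z₁ = (-((M:ℂ)*(ℓ:ℂ)) * τ + (u:ℂ))^(k:ℤ) * f τ :=
      modform_eqn' f ((M:ℤ) + ℓ) v (-((M:ℤ)*ℓ)) u _ _ _ _ hMC hvC hrC huC hdet1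
        ⟨-(ℓ:ℤ), by push_cast; ring⟩ τ z₁ rfl
    set z₂ : ℍ := UHtr z₁ ((ℓ:ℝ)⁻¹) with hz₂def
    have e2 : f z₂ = f z₁ := hTl z₁
    have hdet2 : (1:ℤ) * 1 - 0 * (M:ℤ) = 1 := by ring
    have h3pos := pt_pos' 1 0 (M:ℤ) 1 1 0 (M:ℂ) 1 (by push_cast; ring) (by push_cast; ring)
      (by push_cast; ring) (by push_cast; ring) hdet2 z₂
    set z₃ : ℍ := UpperHalfPlane.mk _ h3pos with hz₃def
    have e3 : f z₃ = ((M:ℂ)*z₂ + 1)^(k:ℤ) * f z₂ :=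
      modform_eqn' f 1 0 (M:ℤ) 1 1 0 (M:ℂ) 1 (by push_cast; ring) (by push_cast; ring)
        (by push_cast; ring) (by push_cast; ring) hdet2 dvd_rfl z₂ z₃ rfl
    have hD₁im : (-((M:ℂ)*(ℓ:ℂ)) * τ + (u:ℂ)).im = (-((M:ℝ)*ℓ)) * (τ:ℂ).im := by
      simp [Complex.add_im, Complex.mul_im]
    have hD₁ne : (-((M:ℂ)*(ℓ:ℂ)) * (τ:ℂ) + (u:ℂ)) ≠ 0 := by
      intro h
      rw [h] at hD₁im
      have hlt : (-((M:ℝ)*ℓ)) * (τ:ℂ).im < 0 := by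
        apply mul_neg_of_neg_of_pos _ τ.2
        have h5 : (0:ℝ) < (M:ℝ)*ℓ := by positivity
        linarith
      rw [← hD₁im] at hlt; simp at hlt
    have hz₁c : (z₁:ℂ) = (((M:ℂ) + ℓ)*τ + v) / (-((M:ℂ)*ℓ)*τ + u) := rfl
    have hz₂c : (z₂:ℂ) = (((M:ℂ) + ℓ)*τ + v) / (-((M:ℂ)*ℓ)*τ + u) + (ℓ:ℂ)⁻¹ := by
      show (z₁:ℂ) + (((ℓ:ℝ)⁻¹ : ℝ) : ℂ) = _
      rw [hz₁c]
      push_cast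
      ring
    have hD₁ne' : (-((M:ℂ) * (ℓ:ℂ) * (τ:ℂ)) + (u:ℂ)) ≠ 0 := by
      rw [show (-((M:ℂ)*(ℓ:ℂ)*(τ:ℂ)) + (u:ℂ)) = (-((M:ℂ)*(ℓ:ℂ))*(τ:ℂ) + (u:ℂ)) by ring]
      exact hD₁ne
    have idA : ((M:ℂ)*(z₂:ℂ) + 1) * (-((M:ℂ)*ℓ)*(τ:ℂ) + u) = (ℓ:ℂ)⁻¹ := by
      rw [hz₂c]
      field_simp [hD₁ne, hD₁ne', hℓC]
      ring_nf
      linear_combination hBez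
    have hz₃ne : ((M:ℂ)*(z₂:ℂ) + 1) ≠ 0 := by
      intro h
      rw [h, zero_mul] at idA
      exact (inv_ne_zero hℓC) idA.symm
    have idB : (z₃:ℂ) = (ℓ:ℂ)^2 * τ + ((ℓ:ℂ) * v + u) := by
      have h0 : (z₃:ℂ) = ((1:ℂ)*(z₂:ℂ) + 0)/((M:ℂ)*(z₂:ℂ) + 1) := rfl
      rw [h0, div_eq_iff hz₃ne]
      have h4 : ((M:ℂ)*(z₂:ℂ) + 1) = (ℓ:ℂ)⁻¹ * (-((M:ℂ)*ℓ)*(τ:ℂ) + u)⁻¹ := by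
        rw [← _root_.mul_inv_rev]
        apply eq_inv_of_mul_eq_one_left
        rw [show ((M:ℂ)*(z₂:ℂ) + 1) * ((-((M:ℂ)*ℓ)*(τ:ℂ) + u) * (ℓ:ℂ)) =
          (((M:ℂ)*(z₂:ℂ) + 1) * (-((M:ℂ)*ℓ)*(τ:ℂ) + u)) * (ℓ:ℂ) by ring, idA,
          inv_mul_cancel₀ hℓC]
      rw [h4, hz₂c]
      field_simp [hD₁ne, hD₁ne', hℓC]
      ring_nf
    have e4 : z₃ = UHtr (UHsc ((ℓ:ℝ)^2) hℓ2R τ) (((ℓ:ℤ)*v + u : ℤ):ℝ) := by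
      ext
      rw [idB, UHtr_coe, UHsc_coe]
      push_cast
      ring
    have e5 : f (UHsc ((ℓ:ℝ)^2) hℓ2R τ) = ((ℓ:ℂ)⁻¹)^(k:ℤ) * f τ := by
      rw [← hTf ((ℓ:ℤ)*v + u) (UHsc ((ℓ:ℝ)^2) hℓ2R τ), ← e4, e3, e2, e1, ← mul_assoc,
        ← mul_zpow, idA]
    rw [e5, ← mul_assoc, ← mul_zpow, mul_inv_cancel₀ hℓC, _root_.one_zpow, one_mul]
  -- Step E : arbitrarily small periods
  have hper : ∀ n : ℕ, ∀ τ : ℍ, f (UHtr τ (((ℓ:ℝ)^(2*n))⁻¹)) = f τ := by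
    intro n
    induction n with
    | zero =>
      intro τ
      have h := hTf 1 τ
      rw [show (((1:ℤ)):ℝ) = (((ℓ:ℝ)^(2*0))⁻¹ : ℝ) by norm_num] at h
      exact h
    | succ n ih =>
      intro τ
      have h1 := hkey (UHtr τ (((ℓ:ℝ)^(2*(n+1)))⁻¹))
      have h2 : UHsc ((ℓ:ℝ)^2) hℓ2R (UHtr τ (((ℓ:ℝ)^(2*(n+1)))⁻¹))
          = UHtr (UHsc ((ℓ:ℝ)^2) hℓ2R τ) (((ℓ:ℝ)^(2*n))⁻¹) := by
        ext
        rw [UHsc_coe, UHtr_coe, UHtr_coe, UHsc_coe]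
        push_cast
        have hpow : ((ℓ:ℂ)^(2*(n+1))) = (ℓ:ℂ)^(2*n) * (ℓ:ℂ)^2 := by
          rw [← pow_add]; ring_nf
        rw [hpow]
        have hne1 : ((ℓ:ℂ)^(2*n)) ≠ 0 := pow_ne_zero _ hℓC
        have hne2 : ((ℓ:ℂ)^2) ≠ 0 := pow_ne_zero _ hℓC
        field_simp
      rw [h1, h2, ih (UHsc ((ℓ:ℝ)^2) hℓ2R τ), ← hkey τ]
  -- Step F : f is constant
  have hconst : ∀ τ σ : ℍ, f τ = f σ := by
    have hS : IsOpen {z : ℂ | 0 < z.im} :=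
      Complex.continuous_im.isOpen_preimage _ isOpen_Ioi
    have hdiff : DifferentiableOn ℂ (⇑f ∘ ofComplex) {z : ℂ | 0 < z.im} :=
      UpperHalfPlane.mdifferentiable_iff.mp f.holo'
    have hFz : ∀ τ : ℍ, (⇑f ∘ ofComplex) (τ:ℂ) = f τ := fun τ => by
      simp [Function.comp, ofComplex_apply]
    have hfd : ∀ z ∈ {z : ℂ | 0 < z.im},
        fderivWithin ℂ (⇑f ∘ ofComplex) {z : ℂ | 0 < z.im} z = 0 := by
      intro z hz
      have hzim : 0 < z.im := hz
      have hda : DifferentiableAt ℂ (⇑f ∘ ofComplex) z :=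
        hdiff.differentiableAt (hS.mem_nhds hz)
      have hd : HasDerivAt (⇑f ∘ ofComplex) (deriv (⇑f ∘ ofComplex) z) z := hda.hasDerivAt
      have h0 : deriv (⇑f ∘ ofComplex) z = 0 := by
        have hds := hasDerivAt_iff_tendsto_slope.mp hd
        have h12 : (1:ℝ) < (ℓ:ℝ)^2 := by
          have : (2:ℝ) ≤ (ℓ:ℝ) := by exact_mod_cast hℓ2
          nlinarith
        have hεlim0 : Filter.Tendsto (fun n : ℕ => (((ℓ:ℝ)^2)⁻¹)^n)
            Filter.atTop (nhds 0) :=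
          tendsto_pow_atTop_nhds_zero_of_lt_one (by positivity)
            (by rw [inv_lt_one_iff₀]; right; exact h12)
        have hεlim : Filter.Tendsto (fun n : ℕ => (((ℓ:ℝ)^(2*n))⁻¹ : ℝ))
            Filter.atTop (nhds 0) := by
          refine hεlim0.congr (fun n => ?_)
          rw [pow_mul, inv_pow]
        have hε0 : ∀ n : ℕ, (((ℓ:ℝ)^(2*n))⁻¹ : ℝ) ≠ 0 := fun n =>
          inv_ne_zero (pow_ne_zero _ hℓRne)
        set u : ℕ → ℂ := fun n => z + ((((ℓ:ℝ)^(2*n))⁻¹ : ℝ) : ℂ) with hu_def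
        have hu1 : Filter.Tendsto u Filter.atTop (nhds z) := by
          have hcast : Filter.Tendsto (fun n : ℕ => (((((ℓ:ℝ)^(2*n))⁻¹ : ℝ)) : ℂ))
              Filter.atTop (nhds ((0:ℝ):ℂ)) :=
            (Complex.continuous_ofReal.tendsto _).comp hεlim
          have h00 := Filter.Tendsto.const_add z hcast
          simpa only [Complex.ofReal_zero, add_zero] using h00
        have hu2 : ∀ n, u n ∈ ({z}ᶜ : Set ℂ) := by
          intro n
          simp only [hu_def, Set.mem_compl_iff, Set.mem_singleton_iff]
          intro h
          have : ((((ℓ:ℝ)^(2*n))⁻¹ : ℝ) : ℂ) = 0 := by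
            have := congrArg (fun w => w - z) h
            simpa [add_sub_cancel_left] using this
          exact hε0 n (by exact_mod_cast this)
        have hu : Filter.Tendsto u Filter.atTop (nhdsWithin z ({z}ᶜ : Set ℂ)) :=
          tendsto_nhdsWithin_of_tendsto_nhds_of_eventually_within u hu1
            (Filter.Eventually.of_forall hu2)
        have hzero : ∀ n, slope (⇑f ∘ ofComplex) z (u n) = 0 := by
          intro n
          rw [slope_def_field]
          have him : 0 < (u n).im := by
            simp only [hu_def, Complex.add_im, Complex.ofReal_im, add_zero]
            exact hzim
          have hval : (⇑f ∘ ofComplex) (u n) = (⇑f ∘ ofComplex) z := by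
            have h1 : (⇑f ∘ ofComplex) (u n) = f ⟨u n, him⟩ := by
              simp only [Function.comp_apply, ofComplex_apply_of_im_pos him]
            have h2 : (⇑f ∘ ofComplex) z = f ⟨z, hzim⟩ := by
              simp only [Function.comp_apply, ofComplex_apply_of_im_pos hzim]
            rw [h1, h2]
            have h3 : (⟨u n, him⟩ : ℍ) = UHtr ⟨z, hzim⟩ (((ℓ:ℝ)^(2*n))⁻¹ : ℝ) := by
              apply UpperHalfPlane.ext
              simp [hu_def, UHtr]
            rw [h3, hper n ⟨z, hzim⟩]
          rw [hval, sub_self, zero_div]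
        have hcomp := hds.comp hu
        have hconst0 : Filter.Tendsto (fun _ : ℕ => (0:ℂ)) Filter.atTop
            (nhds (deriv (⇑f ∘ ofComplex) z)) := by
          refine hcomp.congr (fun n => ?_)
          exact hzero n
        exact tendsto_nhds_unique hconst0 tendsto_const_nhds
      have hfd0 : HasFDerivAt (⇑f ∘ ofComplex) (0 : ℂ →L[ℂ] ℂ) z := by
        have hd' := hd
        rw [h0] at hd'
        have := hasDerivAt_iff_hasFDerivAt.mp hd'
        convert this using 1
        ext x
        simp
        rw [ContinuousLinearMap.toSpanSingleton_zero]
      rw [hda.fderivWithin (hS.uniqueDiffWithinAt hz)]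
      exact hfd0.fderiv
    intro τ σ
    have h := (convex_halfSpace_im_gt 0).is_const_of_fderivWithin_eq_zero hdiff hfd τ.2 σ.2
    rw [← hFz τ, ← hFz σ]
    exact h
  -- conclude : f = 0
  have hfzero : ∀ τ : ℍ, f τ = 0 := by
    intro τ
    have h1 := hkey τ
    rw [hconst (UHsc ((ℓ:ℝ)^2) hℓ2R τ) τ] at h1
    have h2 : ((ℓ:ℂ)^(k:ℤ) - 1) * f τ = 0 := by linear_combination (-1 : ℂ) * h1
    rcases mul_eq_zero.mp h2 with h3 | h3
    · exfalso
      have h4 : (ℓ:ℂ)^(k:ℤ) = 1 := by linear_combination h3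
      have habs := congrArg (‖·‖) h4
      rw [norm_zpow, Complex.norm_natCast, norm_one] at habs
      have h5 : (1:ℝ) < (ℓ:ℝ)^(k:ℤ) := by
        rw [zpow_natCast]
        apply one_lt_pow₀
        · have : (2:ℝ) ≤ (ℓ:ℝ) := by exact_mod_cast hℓ2
          linarith
        · omega
      rw [habs] at h5
      exact lt_irrefl _ h5
    · exact h3
  constructor
  · ext τ
    simpa using hfzero τ
  · ext w
    have hinvpos : (0:ℝ) < (ℓ:ℝ)⁻¹ := by positivity
    have h1 := hrel (UHsc ((ℓ:ℝ)⁻¹) hinvpos w)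
    rw [hfzero _] at h1
    have h2 : UHsc (ℓ:ℝ) hℓR (UHsc ((ℓ:ℝ)⁻¹) hinvpos w) = w := by
      ext
      rw [UHsc_coe, UHsc_coe]
      push_cast
      field_simp
    rw [h2] at h1
    rcases mul_eq_zero.mp h1.symm with h3 | h3
    · exact absurd h3 (zpow_ne_zero _ hℓC)
    · simpa using h3

/-- for `k > 0` the intersection `M_k(Γ₀(N/ℓ)) ∩ W_ℓ(M_k(Γ₀(N/ℓ)))` is zero,
so the sum `M_k(Γ₀(N/ℓ)) + W_ℓ(M_k(Γ₀(N/ℓ)))` is direct. -/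
theorem inter_atkinLehner_image_eq_zero (N ℓ : ℕ) (hN : 0 < N) (hℓ : ℓ.Prime)
    (hdvd : ℓ ∣ N) (hndvd : ¬ ℓ ^ 2 ∣ N) (a b : ℤ)
    (hab : (ℓ : ℤ) * b - a * ((N / ℓ : ℕ) : ℤ) = 1) (k : ℕ) (hk : 0 < k)
    (f g : ModularForm (Gamma0 (N / ℓ)) (k : ℤ))
    (hfg : ∀ z w : ℍ,
      (w : ℂ) = ((ℓ : ℂ) * z + (a : ℂ)) / ((N : ℂ) * z + (ℓ : ℂ) * (b : ℂ)) →
      f z = (ℓ : ℂ) ^ (k : ℤ) *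
        ((N : ℂ) * z + (ℓ : ℂ) * (b : ℂ)) ^ (-(k : ℤ)) * g w) :
    f = 0 ∧ g = 0 := by
  have hM0 : 0 < N / ℓ := Nat.div_pos (Nat.le_of_dvd hN hdvd) hℓ.pos
  have hlM : ¬ ℓ ∣ N / ℓ := by
    intro h
    apply hndvd
    rw [pow_two]
    exact (Nat.dvd_div_iff_mul_dvd hdvd).mp h
  exact aux_atkinLehner (N / ℓ) ℓ hM0 hℓ hlM a b hab k hk f g
    (by rw [Nat.mul_div_cancel' hdvd]; exact hfg)
end

section
/- Let p be a prime number. Then p·B_{p−1} is a p-integral rational number and p·B_{p−1} ≡ −1 (mod p); precisely, there exists a rational number r whose denominator is not divisible by p (i.e. r is p-integral) such that p·B_{p−1} = −1 + p·r. Consequently, the denominator of the Bernoulli number B_{p−1} (in lowest terms) is divisible by p. -/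
open Finset

section Aux
variable {p : ℕ} [hpf : Fact p.Prime]


variable {p : ℕ} [hpf : Fact p.Prime]

-- 1. norm ≤ 1 implies p doesn't divide denominator
lemma aux_den (q : ℚ) (h : ‖(q : ℚ_[p])‖ ≤ 1) : ¬ p ∣ q.den := by
  intro hd
  have hu : IsUnit (q.den : ℤ_[p]) := PadicInt.isUnit_den q h
  obtain ⟨c, hc⟩ := hd
  have : IsUnit ((p : ℤ_[p])) := by
    have : (q.den : ℤ_[p]) = (p : ℤ_[p]) * (c : ℤ_[p]) := by exact_mod_cast congrArg (Nat.cast : ℕ → ℤ_[p]) hc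
    exact isUnit_of_mul_isUnit_left (this ▸ hu)
  have h1 : ‖(p : ℤ_[p])‖ = 1 := PadicInt.isUnit_iff.mp this
  rw [PadicInt.norm_p] at h1
  have hp2 : (2:ℝ) ≤ p := by exact_mod_cast hpf.out.two_le
  have : (p:ℝ)⁻¹ < 1 := by
    rw [inv_lt_one_iff₀]; right; linarith
  simp [h1] at this

-- norm of nat not divisible by p is 1
lemma aux_unit (u : ℕ) (hu : ¬ p ∣ u) : ‖(u : ℚ_[p])‖ = 1 := by
  have h1 : ‖((u:ℤ) : ℚ_[p])‖ ≤ 1 := Padic.norm_int_le_one _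
  have h2 : ¬ ‖((u:ℤ) : ℚ_[p])‖ < 1 := by
    rw [Padic.norm_intCast_lt_one_iff]
    exact_mod_cast hu
  push_cast at h1 h2 ⊢
  linarith [lt_or_eq_of_le h1]

-- 2. key norm estimate for p^(j-1)/j
lemma aux_pow (hp3 : 3 ≤ p) (j : ℕ) (hj : 2 ≤ j) :
    ‖((p : ℚ_[p]) ^ (j-1) / (j : ℚ_[p]))‖ ≤ (p : ℝ)⁻¹ := by
  have hp1 : (1:ℝ) < p := by exact_mod_cast hpf.out.one_lt
  have hp0 : (0:ℝ) < p := by linarith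
  set v := j.factorization p with hv
  have hvd : p ^ v ∣ j := Nat.ordProj_dvd j p
  obtain ⟨u, hu⟩ := hvd
  have hju : j = p ^ v * u := hu
  have hu0 : u ≠ 0 := by rintro rfl; omega
  have hpu : ¬ p ∣ u := by
    have := Nat.not_dvd_ordCompl hpf.out (show j ≠ 0 by omega)
    rwa [show j / p ^ j.factorization p = u by
      rw [← hv, hju, Nat.mul_div_cancel_left _ (pow_pos (show 0 < p by omega) v)]] at this
  -- v + 2 ≤ j
  have hvj : v + 2 ≤ j := by
    rcases Nat.eq_zero_or_pos v with h0 | h1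
    · omega
    · have h3v : 3 ^ v ≤ p ^ v := Nat.pow_le_pow_left hp3 v
      have hvlt : v - 1 < 3 ^ (v - 1) := Nat.lt_pow_self (n := v-1) (by norm_num)
      have : 3 * v ≤ 3 ^ v := by
        calc 3 * v ≤ 3 * 3 ^ (v-1) := by omega
        _ = 3 ^ (v - 1 + 1) := by ring
        _ = 3 ^ v := by congr 1; omega
      have hpj : p ^ v ≤ j := Nat.le_of_dvd (by omega) ⟨u, hju⟩
      omega
  have hnj : ‖(j : ℚ_[p])‖ = (p:ℝ)⁻¹ ^ v := by
    rw [hju]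
    push_cast
    rw [norm_mul, norm_pow, Padic.norm_p, aux_unit u hpu, mul_one]
  rw [norm_div, norm_pow, Padic.norm_p, hnj, div_eq_mul_inv, ← inv_pow, inv_inv]
  have : (p:ℝ)⁻¹ ^ (j-1) * (p:ℝ) ^ v = (p:ℝ)⁻¹ ^ (j - 1 - v) := by
    rw [inv_pow, inv_pow]
    field_simp
    rw [← pow_add]
    congr 1
    omega
  rw [this]
  calc (p:ℝ)⁻¹ ^ (j-1-v) ≤ (p:ℝ)⁻¹ ^ 1 := by
        apply pow_le_pow_of_le_one (by positivity) (by rw [inv_le_one_iff₀]; right; linarith)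
        omega
  _ = (p:ℝ)⁻¹ := pow_one _




-- key strong induction
lemma key_lemma (hp3 : 3 ≤ p) : ∀ m : ℕ,
    ‖((((p : ℚ) * bernoulli m - ∑ k ∈ range p, (k:ℚ)^m : ℚ)) : ℚ_[p])‖ ≤ (p:ℝ)⁻¹ := by
  intro m
  induction m using Nat.strong_induction_on with
  | _ m ih =>
  have hp0 : (0:ℝ) < p := by positivity
  have hpinv : (0:ℝ) ≤ (p:ℝ)⁻¹ := by positivity
  have hm1 : ((m:ℚ)+1) ≠ 0 := by positivity
  have hsum := sum_range_pow p m
  rw [Finset.sum_range_succ] at hsum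
  have hlast : bernoulli m * ((m + 1).choose m) * (p:ℚ) ^ (m + 1 - m) / (m + 1)
      = (p:ℚ) * bernoulli m := by
    rw [Nat.choose_succ_self_right, Nat.add_sub_cancel_left, pow_one]
    push_cast
    field_simp
  rw [hlast] at hsum
  have heq : (p : ℚ) * bernoulli m - ∑ k ∈ range p, (k:ℚ)^m
      = -∑ i ∈ range m, bernoulli i * ((m + 1).choose i) * (p:ℚ) ^ (m + 1 - i) / (m + 1) := by
    rw [hsum]; ring
  rw [heq, Rat.cast_neg, norm_neg, Rat.cast_sum]
  apply IsUltrametricDist.norm_sum_le_of_forall_le_of_nonneg hpinv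
  intro i hi
  rw [Finset.mem_range] at hi
  -- rewrite the term
  have hile : i ≤ m := le_of_lt hi
  have hid : ((m:ℚ)+1) * (m.choose i) = ((m+1).choose i) * ((m - i + 1 : ℕ) : ℚ) := by
    have h1 : (m+1) * m.choose i = (m+1).choose i * (m - i + 1) := by
      have h2 := Nat.add_one_mul_choose_eq m (m - i)
      rw [Nat.choose_symm hile] at h2
      have h3 : (m+1).choose (m - i + 1) = (m+1).choose i := by
        have h4 := Nat.choose_symm (show m - i + 1 ≤ m + 1 by omega)
        rw [show m + 1 - (m - i + 1) = i by omega] at h4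
        exact h4.symm
      rw [h3] at h2
      exact_mod_cast h2
    exact_mod_cast h1
  have hmi : ((m - i + 1 : ℕ) : ℚ) ≠ 0 := by positivity
  have hterm : bernoulli i * ((m + 1).choose i) * (p:ℚ) ^ (m + 1 - i) / (m + 1)
      = (m.choose i : ℚ) * ((p:ℚ) * bernoulli i) * ((p:ℚ) ^ (m - i) / ((m - i + 1 : ℕ) : ℚ)) := by
    rw [show m + 1 - i = (m - i) + 1 by omega, pow_succ, ← mul_div_assoc,
      div_eq_div_iff hm1 hmi]
    linear_combination (-(bernoulli i * (p:ℚ) ^ (m - i) * (p:ℚ))) * hid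
  rw [hterm, Rat.cast_mul, Rat.cast_mul, norm_mul, norm_mul,
    Rat.cast_div, Rat.cast_pow, Rat.cast_natCast, Rat.cast_natCast]
  have hA : ‖((m.choose i : ℕ) : ℚ_[p])‖ ≤ 1 := by
    rw [show (((m.choose i : ℕ)) : ℚ_[p]) = ((m.choose i : ℤ) : ℚ_[p]) by push_cast; ring]
    exact Padic.norm_int_le_one _
  have hB : ‖(((p:ℚ) * bernoulli i : ℚ) : ℚ_[p])‖ ≤ 1 := by
    have h5 := ih i hi
    have h6 : ‖((∑ k ∈ range p, (k:ℚ)^i : ℚ) : ℚ_[p])‖ ≤ 1 := by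
      rw [show ((∑ k ∈ range p, (k:ℚ)^i : ℚ) : ℚ_[p]) = (((∑ k ∈ range p, k^i : ℕ) : ℤ) : ℚ_[p]) by
        push_cast; ring]
      exact Padic.norm_int_le_one _
    calc ‖(((p:ℚ) * bernoulli i : ℚ) : ℚ_[p])‖
        = ‖((((p:ℚ) * bernoulli i - ∑ k ∈ range p, (k:ℚ)^i : ℚ)) : ℚ_[p])
            + ((∑ k ∈ range p, (k:ℚ)^i : ℚ) : ℚ_[p])‖ := by push_cast; ring_nf
      _ ≤ max ((p:ℝ)⁻¹) 1 := le_trans (Padic.nonarchimedean _ _)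
            (max_le_max h5 h6)
      _ = 1 := by
          rw [max_eq_right]
          rw [inv_le_one_iff₀]; right; exact_mod_cast hpf.out.one_le
  have hB' : ‖((p:ℚ_[p]) * ((bernoulli i : ℚ) : ℚ_[p]))‖ ≤ 1 := by
    have : ((p:ℚ_[p]) * ((bernoulli i : ℚ) : ℚ_[p])) = (((p:ℚ) * bernoulli i : ℚ) : ℚ_[p]) := by
      push_cast; ring
    rw [this]; exact hB
  have hC : ‖((p:ℚ_[p]) ^ (m - i) / ((m - i + 1 : ℕ) : ℚ_[p]))‖ ≤ (p:ℝ)⁻¹ := by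
    have h7 := aux_pow hp3 (m - i + 1) (by omega)
    rwa [Nat.add_sub_cancel] at h7
  calc ‖((m.choose i : ℕ) : ℚ_[p])‖ * ‖(p:ℚ_[p]) * ((bernoulli i : ℚ) : ℚ_[p])‖ *
        ‖((p:ℚ_[p]) ^ (m - i) / ((m - i + 1 : ℕ) : ℚ_[p]))‖
      ≤ 1 * 1 * (p:ℝ)⁻¹ :=
        mul_le_mul (mul_le_mul hA hB' (norm_nonneg _) (by norm_num)) hC (norm_nonneg _)
          (by norm_num)
    _ = (p:ℝ)⁻¹ := by ring

end Aux

lemma fermat_sum (p : ℕ) (hp : p.Prime) :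
    (p : ℤ) ∣ ((∑ k ∈ range p, k ^ (p-1) : ℕ) : ℤ) + 1 := by
  haveI : Fact p.Prime := ⟨hp⟩
  obtain ⟨q, rfl⟩ : ∃ q, p = q + 1 := ⟨p - 1, by have := hp.two_le; omega⟩
  have hq1 : 1 ≤ q := by
    have := hp.two_le; omega
  rw [← ZMod.intCast_zmod_eq_zero_iff_dvd]
  push_cast
  rw [Finset.sum_range_succ']
  have hz : ((0:ℕ) : ZMod (q+1)) ^ q = 0 := by
    rw [Nat.cast_zero, zero_pow (by omega)]
  rw [hz, add_zero]
  have hone : ∀ i ∈ range q, ((i+1 : ℕ) : ZMod (q+1)) ^ q = 1 := by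
    intro i hi
    rw [Finset.mem_range] at hi
    have hne : ((i+1 : ℕ) : ZMod (q+1)) ≠ 0 := by
      rw [Ne, ZMod.natCast_eq_zero_iff]
      intro hdvd
      have := Nat.le_of_dvd (by omega) hdvd
      omega
    have := ZMod.pow_card_sub_one_eq_one hne
    rwa [show q + 1 - 1 = q by omega] at this
  rw [Finset.sum_congr rfl (by intro i hi; push_cast; exact_mod_cast hone i hi)]
  rw [Finset.sum_const, card_range, nsmul_eq_mul, mul_one]
  have : ((q : ℕ) : ZMod (q+1)) = -1 := by
    have h := ZMod.natCast_self (q+1)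
    push_cast at h ⊢
    linear_combination h
  rw [this]; ring


/-- for a prime `p`, the rational number `p·B_{p−1}` is `p`-integral and
congruent to `−1` mod `p`: `p·B_{p−1} = −1 + p·r` with `r` `p`-integral. Consequently the
denominator of `B_{p−1}` is divisible by `p`. -/


theorem p_mul_bernoulli_sub_one_congr_neg_one (p : ℕ) (hp : p.Prime) :
    (∃ r : ℚ, ¬ p ∣ r.den ∧ (p : ℚ) * bernoulli (p - 1) = -1 + (p : ℚ) * r) ∧
      p ∣ (bernoulli (p - 1)).den := by
  by_cases hp2 : p = 2
  · subst hp2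
    constructor
    · exact ⟨0, by norm_num, by norm_num [bernoulli_one]⟩
    · norm_num [bernoulli_one]
  · haveI : Fact p.Prime := ⟨hp⟩
    have hp3 : 3 ≤ p := by have := hp.two_le; omega
    have hpR : (0:ℝ) < p := by positivity
    have hpQ : ((p:ℚ)) ≠ 0 := by positivity
    set B := bernoulli (p-1) with hB
    set N : ℕ := ∑ k ∈ range p, k ^ (p-1) with hNdef
    have hkey : ‖((((p : ℚ) * B - (N:ℚ) : ℚ)) : ℚ_[p])‖ ≤ (p:ℝ)⁻¹ := by
      have h0 := key_lemma hp3 (p-1)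
      have hSN : (∑ k ∈ range p, (k:ℚ)^(p-1)) = (N:ℚ) := by rw [hNdef]; push_cast; ring
      rwa [hSN] at h0
    obtain ⟨t, ht⟩ := fermat_sum p hp
    set r : ℚ := B + 1/(p:ℚ) with hr
    have heq : (p:ℚ) * B = -1 + (p:ℚ) * r := by
      rw [hr]; field_simp; ring
    have h1 : ‖(((p:ℚ)*B + 1 : ℚ) : ℚ_[p])‖ ≤ (p:ℝ)⁻¹ := by
      have hsplit : ((p:ℚ)*B + 1 : ℚ) = ((p:ℚ)*B - (N:ℚ)) + ((N:ℚ)+1) := by ring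
      have h3 : ‖(((N:ℚ)+1 : ℚ) : ℚ_[p])‖ ≤ (p:ℝ)⁻¹ := by
        have hcast : (((N:ℚ)+1 : ℚ) : ℚ_[p]) = (p:ℚ_[p]) * ((t:ℤ):ℚ_[p]) := by
          have : ((N:ℚ)+1 : ℚ) = ((p * t : ℤ) : ℚ) := by rw [← ht, hNdef]; push_cast; ring
          rw [this]; push_cast; ring
        rw [hcast, norm_mul, Padic.norm_p]
        calc (p:ℝ)⁻¹ * ‖((t:ℤ):ℚ_[p])‖ ≤ (p:ℝ)⁻¹ * 1 :=
              mul_le_mul_of_nonneg_left (Padic.norm_int_le_one t) (by positivity)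
          _ = (p:ℝ)⁻¹ := mul_one _
      calc ‖(((p:ℚ)*B + 1 : ℚ) : ℚ_[p])‖
          = ‖(((p:ℚ)*B - (N:ℚ) : ℚ) : ℚ_[p]) + (((N:ℚ)+1 : ℚ) : ℚ_[p])‖ := by
            rw [hsplit]; push_cast; ring_nf
        _ ≤ max _ _ := Padic.nonarchimedean _ _
        _ ≤ (p:ℝ)⁻¹ := max_le hkey h3
    have hrnorm : ‖((r:ℚ) : ℚ_[p])‖ ≤ 1 := by
      have hmul : ((p:ℚ) * r : ℚ) = (p:ℚ)*B + 1 := by rw [hr]; field_simp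
      have h4 : (p:ℝ)⁻¹ * ‖((r:ℚ) : ℚ_[p])‖ ≤ (p:ℝ)⁻¹ := by
        have : ‖(((p:ℚ) * r : ℚ) : ℚ_[p])‖ = (p:ℝ)⁻¹ * ‖((r:ℚ) : ℚ_[p])‖ := by
          rw [Rat.cast_mul, norm_mul, Rat.cast_natCast, Padic.norm_p]
        rw [← this, hmul]
        exact h1
      calc ‖((r:ℚ) : ℚ_[p])‖ = (p:ℝ) * ((p:ℝ)⁻¹ * ‖((r:ℚ) : ℚ_[p])‖) := by
            rw [← mul_assoc, mul_inv_cancel₀ (ne_of_gt hpR), one_mul]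
        _ ≤ (p:ℝ) * (p:ℝ)⁻¹ := mul_le_mul_of_nonneg_left h4 (le_of_lt hpR)
        _ = 1 := mul_inv_cancel₀ (ne_of_gt hpR)
    refine ⟨⟨r, aux_den r hrnorm, heq⟩, ?_⟩
    by_contra hden
    have hBnorm : ‖((B:ℚ) : ℚ_[p])‖ ≤ 1 := Padic.norm_rat_le_one hden
    have hdiff : (r - B : ℚ) = 1/(p:ℚ) := by rw [hr]; ring
    have h5 : ‖((r - B : ℚ) : ℚ_[p])‖ ≤ 1 := by
      rw [Rat.cast_sub]
      calc ‖((r:ℚ) : ℚ_[p]) - ((B:ℚ) : ℚ_[p])‖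
          = ‖((r:ℚ) : ℚ_[p]) + (-((B:ℚ) : ℚ_[p]))‖ := by rw [sub_eq_add_neg]
        _ ≤ max ‖((r:ℚ) : ℚ_[p])‖ ‖(-((B:ℚ) : ℚ_[p]))‖ := Padic.nonarchimedean _ _
        _ ≤ 1 := max_le hrnorm (by rw [norm_neg]; exact hBnorm)
    rw [hdiff] at h5
    have h6 : ‖((1/(p:ℚ) : ℚ) : ℚ_[p])‖ = (p:ℝ) := by
      rw [Rat.cast_div, Rat.cast_one, Rat.cast_natCast, norm_div, norm_one, Padic.norm_p,
        one_div, inv_inv]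
    rw [h6] at h5
    have : (3:ℝ) ≤ p := by exact_mod_cast hp3
    linarith
end

section
/- Let N be a positive integer, ℓ a prime dividing N exactly once, a, b integers with ℓb − a(N/ℓ) = 1, and γ_ℓ = [[ℓ, a],[N, ℓb]]. Then: (i) for every δ = [[w, x],[c, d]] ∈ Γ₀(N), the rational matrix γ_ℓ·δ·γ_ℓ⁻¹ has integer entries, determinant 1, lower-left entry divisible by N, and its lower-right entry is congruent to d modulo N/ℓ; (ii) consequently, if χ' is a Dirichlet character modulo N/ℓ with values in ℂ, k is an integer, and f : ℍ → ℂ satisfies f(δ·z) = χ'(d)·(cz+d)^k·f(z) for all δ = [[w,x],[c,d]] ∈ Γ₀(N), then the function g(z) := (Nz+ℓb)^{−k}·f(γ_ℓ·z) satisfies the same transformation law: g(δ·z) = χ'(d)·(cz+d)^k·g(z) for all δ = [[w,x],[c,d]] ∈ Γ₀(N). (Thus the Atkin–Lehner operator w_ℓ preserves the space of modular forms with character χ induced from level N/ℓ.) -/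
open UpperHalfPlane Complex CongruenceSubgroup MatrixGroups Matrix

private lemma AL_aux (N ℓ M : ℕ) (hNM : (N : ℤ) = (ℓ : ℤ) * (M : ℤ)) (hℓ0 : (ℓ : ℤ) ≠ 0)
    (a b : ℤ) (hab : (ℓ : ℤ) * b - a * (M : ℤ) = 1) (δ : SL(2, ℤ)) (hδ : δ ∈ Gamma0 N) :
    ∃ m : Matrix (Fin 2) (Fin 2) ℤ,
      m * !![(ℓ : ℤ), a; (N : ℤ), (ℓ : ℤ) * b] =
        !![(ℓ : ℤ), a; (N : ℤ), (ℓ : ℤ) * b] * (δ : Matrix (Fin 2) (Fin 2) ℤ) ∧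
      m.det = 1 ∧ (N : ℤ) ∣ m 1 0 ∧
      m 1 1 ≡ (δ : Matrix (Fin 2) (Fin 2) ℤ) 1 1 [ZMOD (M : ℤ)] := by
  have hc : (N : ℤ) ∣ (δ : Matrix (Fin 2) (Fin 2) ℤ) 1 0 :=
    (ZMod.intCast_zmod_eq_zero_iff_dvd _ N).mp (Gamma0_mem.mp hδ)
  obtain ⟨c', hc'⟩ := hc
  set w := (δ : Matrix (Fin 2) (Fin 2) ℤ) 0 0 with hw
  set x := (δ : Matrix (Fin 2) (Fin 2) ℤ) 0 1 with hx
  set d := (δ : Matrix (Fin 2) (Fin 2) ℤ) 1 1 with hd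
  set m : Matrix (Fin 2) (Fin 2) ℤ :=
    !![(ℓ:ℤ)*b*w + a*b*((N:ℤ)*c') - (N:ℤ)*x - a*(M:ℤ)*d,
       -(a*w) - a^2*((M:ℤ)*c') + (ℓ:ℤ)*x + a*d;
       (N:ℤ)*(b*w - (M:ℤ)*x - b*d) + (ℓ:ℤ)*b^2*((N:ℤ)*c'),
       -(a*(M:ℤ)*w) - a*b*((N:ℤ)*c') + (N:ℤ)*x + (ℓ:ℤ)*b*d] with hm
  have hmul : m * !![(ℓ : ℤ), a; (N : ℤ), (ℓ : ℤ) * b] =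
      !![(ℓ : ℤ), a; (N : ℤ), (ℓ : ℤ) * b] * (δ : Matrix (Fin 2) (Fin 2) ℤ) := by
    ext i j
    fin_cases i <;> fin_cases j
    · simp [hm, Matrix.mul_apply, Fin.sum_univ_two, ← hw, ← hx, ← hd, hc']
      rw [hNM]; linear_combination ((ℓ:ℤ)*w + (ℓ:ℤ)*a*(M:ℤ)*c') * hab
    · simp [hm, Matrix.mul_apply, Fin.sum_univ_two, ← hw, ← hx, ← hd, hc']
      rw [hNM]; linear_combination ((ℓ:ℤ)*x + a*d) * hab
    · simp [hm, Matrix.mul_apply, Fin.sum_univ_two, ← hw, ← hx, ← hd, hc']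
      rw [hNM]; linear_combination ((ℓ:ℤ)*(M:ℤ)*w + (ℓ:ℤ)^2*b*(M:ℤ)*c') * hab
    · simp [hm, Matrix.mul_apply, Fin.sum_univ_two, ← hw, ← hx, ← hd, hc']
      rw [hNM]; linear_combination ((ℓ:ℤ)*(M:ℤ)*x + (ℓ:ℤ)*b*d) * hab
  have hdetG : (!![(ℓ : ℤ), a; (N : ℤ), (ℓ : ℤ) * b]).det = (ℓ : ℤ) := by
    rw [Matrix.det_fin_two_of, hNM]; linear_combination (ℓ:ℤ) * hab
  have hdetm : m.det = 1 := by
    have h3 := congrArg Matrix.det hmul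
    rw [Matrix.det_mul, Matrix.det_mul, hdetG, δ.property, mul_one] at h3
    exact mul_right_cancel₀ hℓ0 (by rw [h3, one_mul])
  refine ⟨m, hmul, hdetm, ?_, ?_⟩
  · exact ⟨b*w - (M:ℤ)*x - b*d + (ℓ:ℤ)*b^2*c', by simp [hm]; ring⟩
  · have hMd : (M:ℤ) ∣ d - (-(a*(M:ℤ)*w) - a*b*((N:ℤ)*c') + (N:ℤ)*x + (ℓ:ℤ)*b*d) := by
      refine ⟨a*w + a*b*(ℓ:ℤ)*c' - (ℓ:ℤ)*x - a*d, ?_⟩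
      rw [hNM]; linear_combination (-d) * hab
    have hentry : m 1 1 = -(a*(M:ℤ)*w) - a*b*((N:ℤ)*c') + (N:ℤ)*x + (ℓ:ℤ)*b*d := by simp [hm]
    have : m 1 1 ≡ d [ZMOD (M:ℤ)] := Int.modEq_iff_dvd.mpr (by rw [hentry]; exact hMd)
    simpa using this

private lemma AL_coordSL (g : SL(2, ℤ)) (t : ℍ) :
    ((g • t : ℍ) : ℂ) =
      (((g : Matrix (Fin 2) (Fin 2) ℤ) 0 0 : ℂ) * t + ((g : Matrix (Fin 2) (Fin 2) ℤ) 0 1 : ℂ)) /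
        (((g : Matrix (Fin 2) (Fin 2) ℤ) 1 0 : ℂ) * t +
          ((g : Matrix (Fin 2) (Fin 2) ℤ) 1 1 : ℂ)) := by
  rw [UpperHalfPlane.specialLinearGroup_apply, UpperHalfPlane.coe_mk]
  norm_num

private lemma AL_dz_ne_zero (g : SL(2, ℤ)) (t : ℍ) :
    ((g : Matrix (Fin 2) (Fin 2) ℤ) 1 0 : ℂ) * t + ((g : Matrix (Fin 2) (Fin 2) ℤ) 1 1 : ℂ) ≠ 0 := by
  have := UpperHalfPlane.denom_ne_zero (g : GL (Fin 2) ℝ) t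
  rwa [ModularGroup.denom_apply] at this

private lemma AL_real_denom_ne_zero (r s : ℝ) (hr : r ≠ 0) (t : ℍ) :
    (r : ℂ) * t + (s : ℂ) ≠ 0 := by
  intro h
  have him : ((r : ℂ) * t + (s : ℂ)).im = r * t.im := by
    simp [Complex.add_im, Complex.mul_im, UpperHalfPlane.coe_im]
  rw [h] at him
  exact (mul_ne_zero hr (ne_of_gt t.im_pos)) him.symm

/-- (i) `γ_ℓ δ γ_ℓ⁻¹ ∈ Γ₀(N)` with lower-right entry congruent to that of
`δ` mod `N/ℓ`; (ii) consequently the Atkin–Lehner operator preserves the transformation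
law of modular forms with character `χ'` induced from level `N/ℓ`. -/
theorem atkinLehner_preserves_character (N ℓ : ℕ) (hN : 0 < N) (hℓ : ℓ.Prime)
    (hdvd : ℓ ∣ N) (hndvd : ¬ ℓ ^ 2 ∣ N) (a b : ℤ)
    (hab : (ℓ : ℤ) * b - a * ((N / ℓ : ℕ) : ℤ) = 1) :
    (∀ δ : SL(2, ℤ), δ ∈ Gamma0 N →
      ∃ m : Matrix (Fin 2) (Fin 2) ℤ,
        m.map (Int.cast : ℤ → ℚ) =
          !![(ℓ : ℚ), (a : ℚ); (N : ℚ), (ℓ : ℚ) * (b : ℚ)] *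
            ((δ : Matrix (Fin 2) (Fin 2) ℤ).map (Int.cast : ℤ → ℚ)) *
            (!![(ℓ : ℚ), (a : ℚ); (N : ℚ), (ℓ : ℚ) * (b : ℚ)])⁻¹ ∧
        m.det = 1 ∧ (N : ℤ) ∣ m 1 0 ∧
        m 1 1 ≡ (δ : Matrix (Fin 2) (Fin 2) ℤ) 1 1 [ZMOD ((N / ℓ : ℕ) : ℤ)]) ∧
    (∀ (χ' : DirichletCharacter ℂ (N / ℓ)) (k : ℤ) (f : ℍ → ℂ),
      (∀ δ : SL(2, ℤ), δ ∈ Gamma0 N → ∀ z : ℍ,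
        f (δ • z) =
          χ' (((δ : Matrix (Fin 2) (Fin 2) ℤ) 1 1 : ZMod (N / ℓ))) *
            (((δ : Matrix (Fin 2) (Fin 2) ℤ) 1 0 : ℂ) * z +
              ((δ : Matrix (Fin 2) (Fin 2) ℤ) 1 1 : ℂ)) ^ k * f z) →
      ∀ δ : SL(2, ℤ), δ ∈ Gamma0 N → ∀ z : ℍ, ∀ wδ wz : ℍ,
        (wδ : ℂ) = ((ℓ : ℂ) * ((δ • z : ℍ) : ℂ) + (a : ℂ)) /
            ((N : ℂ) * ((δ • z : ℍ) : ℂ) + (ℓ : ℂ) * (b : ℂ)) →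
        (wz : ℂ) = ((ℓ : ℂ) * z + (a : ℂ)) / ((N : ℂ) * z + (ℓ : ℂ) * (b : ℂ)) →
        ((N : ℂ) * ((δ • z : ℍ) : ℂ) + (ℓ : ℂ) * (b : ℂ)) ^ (-k) * f wδ =
          χ' (((δ : Matrix (Fin 2) (Fin 2) ℤ) 1 1 : ZMod (N / ℓ))) *
            (((δ : Matrix (Fin 2) (Fin 2) ℤ) 1 0 : ℂ) * z +
              ((δ : Matrix (Fin 2) (Fin 2) ℤ) 1 1 : ℂ)) ^ k *
            (((N : ℂ) * z + (ℓ : ℂ) * (b : ℂ)) ^ (-k) * f wz)) := by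
  have hℓ0 : (ℓ : ℤ) ≠ 0 := Int.natCast_ne_zero.mpr hℓ.ne_zero
  have hNM : (N : ℤ) = (ℓ : ℤ) * ((N / ℓ : ℕ) : ℤ) := by
    exact_mod_cast (Nat.mul_div_cancel' hdvd).symm
  constructor
  · -- part (i)
    intro δ hδ
    obtain ⟨m, hmul, hdetm, hdvd10, hcong⟩ := AL_aux N ℓ (N / ℓ) hNM hℓ0 a b hab δ hδ
    refine ⟨m, ?_, hdetm, hdvd10, hcong⟩
    have hGq : (!![(ℓ : ℤ), a; (N : ℤ), (ℓ : ℤ) * b]).map (Int.cast : ℤ → ℚ) =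
        !![(ℓ : ℚ), (a : ℚ); (N : ℚ), (ℓ : ℚ) * (b : ℚ)] := by
      ext i j; fin_cases i <;> fin_cases j <;> simp
    have hdetGq : IsUnit (!![(ℓ : ℚ), (a : ℚ); (N : ℚ), (ℓ : ℚ) * (b : ℚ)]).det := by
      rw [Matrix.det_fin_two_of]
      have : (ℓ : ℚ) * ((ℓ : ℚ) * b) - (a : ℚ) * N = (ℓ : ℚ) := by
        have hNMq := congrArg (Int.cast : ℤ → ℚ) hNM
        have habq := congrArg (Int.cast : ℤ → ℚ) hab
        push_cast at hNMq habq ⊢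
        rw [hNMq]
        linear_combination (ℓ:ℚ) * habq
      rw [this]
      exact isUnit_iff_ne_zero.mpr (by exact_mod_cast hℓ.ne_zero)
    haveI := Matrix.invertibleOfIsUnitDet _ hdetGq
    refine ((Matrix.mul_inv_eq_iff_eq_mul_of_invertible _ _ _).mpr ?_).symm
    have := congrArg (fun (A : Matrix (Fin 2) (Fin 2) ℤ) => A.map (Int.cast : ℤ → ℚ)) hmul
    rw [show (Int.cast : ℤ → ℚ) = ⇑(Int.castRingHom ℚ) from rfl] at this ⊢
    rw [Matrix.map_mul, Matrix.map_mul] at this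
    rw [show ((!![(ℓ : ℤ), a; (N : ℤ), (ℓ : ℤ) * b]).map ⇑(Int.castRingHom ℚ)) =
        !![(ℓ : ℚ), (a : ℚ); (N : ℚ), (ℓ : ℚ) * (b : ℚ)] from hGq] at this
    exact this.symm
  · -- part (ii)
    intro χ' k f hf δ hδ z wδ wz hwδ hwz
    obtain ⟨m, hmul, hdetm, hdvd10, hcong⟩ := AL_aux N ℓ (N / ℓ) hNM hℓ0 a b hab δ hδ
    set mSL : SL(2, ℤ) := ⟨m, hdetm⟩ with hmSL
    have hmcoe : (mSL : Matrix (Fin 2) (Fin 2) ℤ) = m := rfl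
    have hmem : mSL ∈ Gamma0 N := by
      rw [Gamma0_mem, hmcoe]
      exact (ZMod.intCast_zmod_eq_zero_iff_dvd _ N).mpr hdvd10
    -- notation
    set u : ℂ := ((δ • z : ℍ) : ℂ) with hu0
    set Z : ℂ := (z : ℂ) with hZ0
    have hNq : (N : ℂ) = (ℓ : ℂ) * ((N / ℓ : ℕ) : ℂ) := by exact_mod_cast hNM
    -- entries of identity over ℂ
    have E : ∀ i j, ((m * !![(ℓ : ℤ), a; (N : ℤ), (ℓ : ℤ) * b]) i j : ℂ) =
        ((!![(ℓ : ℤ), a; (N : ℤ), (ℓ : ℤ) * b] * (δ : Matrix (Fin 2) (Fin 2) ℤ)) i j : ℂ) := by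
      intro i j; exact_mod_cast congrArg (fun A => ((A i j : ℤ) : ℂ)) hmul
    have E1 := E 0 0; have E2 := E 0 1; have E3 := E 1 0; have E4 := E 1 1
    simp only [Matrix.mul_apply, Fin.sum_univ_two, Matrix.cons_val_zero, Matrix.cons_val_one,
      Matrix.head_cons, Matrix.of_apply, Matrix.cons_val', Matrix.empty_val',
      Matrix.cons_val_fin_one, Matrix.head_fin_const] at E1 E2 E3 E4
    push_cast at E1 E2 E3 E4
    -- nonzero denominators
    have hdz : ((δ : Matrix (Fin 2) (Fin 2) ℤ) 1 0 : ℂ) * Z +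
        ((δ : Matrix (Fin 2) (Fin 2) ℤ) 1 1 : ℂ) ≠ 0 := AL_dz_ne_zero δ z
    have hN0 : (N : ℝ) ≠ 0 := by exact_mod_cast hN.ne'
    have hDz : (N : ℂ) * Z + (ℓ : ℂ) * (b : ℂ) ≠ 0 := by
      have := AL_real_denom_ne_zero (N : ℝ) ((ℓ : ℝ) * (b : ℝ)) hN0 z
      push_cast at this ⊢; exact this
    have hDu : (N : ℂ) * u + (ℓ : ℂ) * (b : ℂ) ≠ 0 := by
      have := AL_real_denom_ne_zero (N : ℝ) ((ℓ : ℝ) * (b : ℝ)) hN0 (δ • z)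
      push_cast at this ⊢; exact this
    -- coordinates
    have hucoord : u * (((δ : Matrix (Fin 2) (Fin 2) ℤ) 1 0 : ℂ) * Z +
        ((δ : Matrix (Fin 2) (Fin 2) ℤ) 1 1 : ℂ)) =
        ((δ : Matrix (Fin 2) (Fin 2) ℤ) 0 0 : ℂ) * Z +
          ((δ : Matrix (Fin 2) (Fin 2) ℤ) 0 1 : ℂ) := by
      rw [hu0, AL_coordSL δ z]
      rw [← hZ0]; exact div_mul_cancel₀ _ hdz
    have hwzZ : (wz : ℂ) * ((N : ℂ) * Z + (ℓ : ℂ) * (b : ℂ)) = (ℓ : ℂ) * Z + (a : ℂ) := by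
      rw [hwz]; exact div_mul_cancel₀ _ hDz
    -- key identities
    have hA : ((m 1 0 : ℂ) * wz + (m 1 1 : ℂ)) * ((N : ℂ) * Z + (ℓ : ℂ) * (b : ℂ)) =
        (((δ : Matrix (Fin 2) (Fin 2) ℤ) 1 0 : ℂ) * Z +
          ((δ : Matrix (Fin 2) (Fin 2) ℤ) 1 1 : ℂ)) * ((N : ℂ) * u + (ℓ : ℂ) * (b : ℂ)) := by
      linear_combination (m 1 0 : ℂ) * hwzZ + Z * E3 + E4 - (N : ℂ) * hucoord
    have hB : ((m 0 0 : ℂ) * wz + (m 0 1 : ℂ)) * ((N : ℂ) * Z + (ℓ : ℂ) * (b : ℂ)) =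
        (((δ : Matrix (Fin 2) (Fin 2) ℤ) 1 0 : ℂ) * Z +
          ((δ : Matrix (Fin 2) (Fin 2) ℤ) 1 1 : ℂ)) * ((ℓ : ℂ) * u + (a : ℂ)) := by
      linear_combination (m 0 0 : ℂ) * hwzZ + Z * E1 + E2 - (ℓ : ℂ) * hucoord
    have hden : (m 1 0 : ℂ) * wz + (m 1 1 : ℂ) ≠ 0 := by
      intro h0
      apply mul_ne_zero hdz hDu
      rw [← hA, h0, zero_mul]
    -- mSL • wz = wδ
    have hsm : mSL • wz = wδ := by
      apply UpperHalfPlane.ext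
      rw [AL_coordSL mSL wz, hwδ, hmcoe]
      rw [div_eq_div_iff hden hDu]
      apply mul_left_cancel₀ hDz
      linear_combination ((N : ℂ) * u + (ℓ : ℂ) * (b : ℂ)) * hB -
        ((ℓ : ℂ) * u + (a : ℂ)) * hA
    -- character equality
    have hchi : χ' ((m 1 1 : ZMod (N / ℓ))) =
        χ' (((δ : Matrix (Fin 2) (Fin 2) ℤ) 1 1 : ZMod (N / ℓ))) := by
      congr 1
      exact (ZMod.intCast_eq_intCast_iff _ _ _).mpr hcong
    -- apply transformation law
    have hfe := hf mSL hmem wz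
    rw [hsm, hmcoe] at hfe
    rw [hfe, hchi]
    -- final zpow computation
    have hX : (m 1 0 : ℂ) * wz + (m 1 1 : ℂ) =
        (((δ : Matrix (Fin 2) (Fin 2) ℤ) 1 0 : ℂ) * Z +
          ((δ : Matrix (Fin 2) (Fin 2) ℤ) 1 1 : ℂ)) * ((N : ℂ) * u + (ℓ : ℂ) * (b : ℂ)) /
          ((N : ℂ) * Z + (ℓ : ℂ) * (b : ℂ)) := by
      rw [eq_div_iff hDz]; exact hA
    rw [hX, div_zpow, mul_zpow]
    rw [_root_.zpow_neg, _root_.zpow_neg]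
    have h1 : ((N : ℂ) * u + (ℓ : ℂ) * (b : ℂ)) ^ k ≠ 0 := zpow_ne_zero _ hDu
    have h2 : ((N : ℂ) * Z + (ℓ : ℂ) * (b : ℂ)) ^ k ≠ 0 := zpow_ne_zero _ hDz
    field_simp
end
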